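/- arXiv:2305.14342 — 7 statements merged into one kernel-verified Lean document; each statement's English description precedes it below -/
import Mathlib

section
/- Let L: ℝ^d → ℝ be twice continuously differentiable and strictly convex with minimizer θ*, let μ = λ_min(∇²L(θ*)), and suppose there exists R > 0 such that for all θ, θ' with ‖θ-θ'‖₂ ≤ R we have ‖(∇²L(θ'))⁻¹ ∇²L(θ)‖₂ ≤ 2. Then for any θ with L(θ) - min L ≤ μR²/4, it holds that ‖θ - θ*‖₂ ≤ 2·sqrt((L(θ) - min L)/μ) ≤ R. -/
open scoped InnerProductSpace
open Matrix
noncomputable section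

section SophiaAux

variable {d : ℕ}

private lemma sophia_toEuclideanLin_eigen {M : Matrix (Fin d) (Fin d) ℝ} (hM : M.IsHermitian)
    (i : Fin d) :
    Matrix.toEuclideanLin M (hM.eigenvectorBasis i) =
      hM.eigenvalues i • hM.eigenvectorBasis i := by
  have h := hM.mulVec_eigenvectorBasis i
  rw [Matrix.toEuclideanLin_apply]
  ext j
  simpa using congrFun h j

private lemma sophia_inner_toEuclideanLin_eq {M : Matrix (Fin d) (Fin d) ℝ} (hM : M.IsHermitian)
    (v : EuclideanSpace ℝ (Fin d)) :
    ⟪v, Matrix.toEuclideanLin M v⟫_ℝ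
      = ∑ i, hM.eigenvalues i * (⟪v, hM.eigenvectorBasis i⟫_ℝ * ⟪hM.eigenvectorBasis i, v⟫_ℝ) := by
  have hsym := (Matrix.isHermitian_iff_isSymmetric.mp hM)
  rw [← hM.eigenvectorBasis.sum_inner_mul_inner v (Matrix.toEuclideanLin M v)]
  congr 1; ext i
  rw [← hsym (hM.eigenvectorBasis i) v, sophia_toEuclideanLin_eigen hM i, inner_smul_left]
  simp only [starRingEnd_apply, star_trivial]; ring

private lemma sophia_norm_sq_eq_sum_inner {M : Matrix (Fin d) (Fin d) ℝ} (hM : M.IsHermitian)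
    (v : EuclideanSpace ℝ (Fin d)) :
    ‖v‖ ^ 2 = ∑ i, ⟪v, hM.eigenvectorBasis i⟫_ℝ * ⟪hM.eigenvectorBasis i, v⟫_ℝ := by
  rw [hM.eigenvectorBasis.sum_inner_mul_inner v v, real_inner_self_eq_norm_sq]

private lemma sophia_rayleigh_le {M : Matrix (Fin d) (Fin d) ℝ} (hM : M.IsHermitian) {c : ℝ}
    (h : ∀ i, hM.eigenvalues i ≤ c) (v : EuclideanSpace ℝ (Fin d)) :
    ⟪v, Matrix.toEuclideanLin M v⟫_ℝ ≤ c * ‖v‖ ^ 2 := by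
  rw [sophia_inner_toEuclideanLin_eq hM, sophia_norm_sq_eq_sum_inner hM, Finset.mul_sum]
  refine Finset.sum_le_sum fun i _ => ?_
  have hs : 0 ≤ ⟪v, hM.eigenvectorBasis i⟫_ℝ * ⟪hM.eigenvectorBasis i, v⟫_ℝ := by
    rw [real_inner_comm v]; exact mul_self_nonneg _
  exact mul_le_mul_of_nonneg_right (h i) hs

private lemma sophia_rayleigh_ge {M : Matrix (Fin d) (Fin d) ℝ} (hM : M.IsHermitian) {c : ℝ}
    (h : ∀ i, c ≤ hM.eigenvalues i) (v : EuclideanSpace ℝ (Fin d)) :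
    c * ‖v‖ ^ 2 ≤ ⟪v, Matrix.toEuclideanLin M v⟫_ℝ := by
  rw [sophia_inner_toEuclideanLin_eq hM, sophia_norm_sq_eq_sum_inner hM, Finset.mul_sum]
  refine Finset.sum_le_sum fun i _ => ?_
  have hs : 0 ≤ ⟪v, hM.eigenvectorBasis i⟫_ℝ * ⟪hM.eigenvectorBasis i, v⟫_ℝ := by
    rw [real_inner_comm v]; exact mul_self_nonneg _
  exact mul_le_mul_of_nonneg_right (h i) hs

private lemma sophia_toEuclideanLin_mul_apply (M N : Matrix (Fin d) (Fin d) ℝ)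
    (x : EuclideanSpace ℝ (Fin d)) :
    Matrix.toEuclideanLin (M * N) x = Matrix.toEuclideanLin M (Matrix.toEuclideanLin N x) := by
  simp [Matrix.toEuclideanLin_apply, Matrix.mulVec_mulVec]

private lemma sophia_toEuclideanLin_one_apply (x : EuclideanSpace ℝ (Fin d)) :
    Matrix.toEuclideanLin (1 : Matrix (Fin d) (Fin d) ℝ) x = x := by
  simp [Matrix.toEuclideanLin_apply]

private lemma sophia_inner_toEuclideanLin_pos {M : Matrix (Fin d) (Fin d) ℝ} (hM : M.PosDef)
    {v : EuclideanSpace ℝ (Fin d)} (hv : v ≠ 0) :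
    0 < ⟪v, Matrix.toEuclideanLin M v⟫_ℝ := by
  rw [Matrix.toEuclideanLin_apply, EuclideanSpace.inner_eq_star_dotProduct]
  simp only [Equiv.apply_symm_apply]
  have := hM.dotProduct_mulVec_pos (x := v.ofLp) (by simpa using hv)
  rw [dotProduct_comm]; simpa using this

open scoped MatrixOrder in
private lemma sophia_comparison {A B : Matrix (Fin d) (Fin d) ℝ} (hA : A.PosDef) (hB : B.PosDef)
    (h : ‖(Matrix.toEuclideanLin (A⁻¹ * B)).toContinuousLinearMap‖ ≤ 2)
    (v : EuclideanSpace ℝ (Fin d)) :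
    ⟪v, Matrix.toEuclideanLin B v⟫_ℝ ≤ 2 * ⟪v, Matrix.toEuclideanLin A v⟫_ℝ := by
  set S := CFC.sqrt A with hSdef
  have hSS : S * S = A := CFC.sqrt_mul_sqrt_self A hA.posSemidef.nonneg
  have hSH : S.IsHermitian := (CFC.sqrt_nonneg A).posSemidef.1
  have hdet : IsUnit S.det := by
    have h1 : S.det * S.det = A.det := by rw [← Matrix.det_mul, hSS]
    have h2 : (0:ℝ) < A.det := hA.det_pos
    have : S.det ≠ 0 := by
      intro h0; rw [h0, mul_zero] at h1; exact h2.ne (h1)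
    exact this.isUnit
  have hSinv : S⁻¹ * S = 1 := Matrix.nonsing_inv_mul S hdet
  have hSinv' : S * S⁻¹ = 1 := Matrix.mul_nonsing_inv S hdet
  have hSinvH : S⁻¹.IsHermitian := hSH.inv
  set T := S⁻¹ * B * S⁻¹ with hTdef
  have hT : T.PosSemidef := by
    have := hB.posSemidef.mul_mul_conjTranspose_same S⁻¹
    rwa [hSinvH.eq] at this
  have hAinv : A⁻¹ = S⁻¹ * S⁻¹ := by rw [← hSS, Matrix.mul_inv_rev]
  have heig : ∀ i, hT.1.eigenvalues i ≤ 2 := by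
    intro i
    set u := hT.1.eigenvectorBasis i with hudef
    set lam := hT.1.eigenvalues i with hlamdef
    set w := Matrix.toEuclideanLin S⁻¹ u with hwdef
    have hw : Matrix.toEuclideanLin (A⁻¹ * B) w = lam • w := by
      rw [hwdef, ← sophia_toEuclideanLin_mul_apply]
      have hmat : A⁻¹ * B * S⁻¹ = S⁻¹ * T := by
        rw [hAinv, hTdef]; noncomm_ring
      rw [hmat, sophia_toEuclideanLin_mul_apply, sophia_toEuclideanLin_eigen hT.1 i,
        LinearMap.map_smul]
    have hwne : w ≠ 0 := by
      intro h0
      have hu : Matrix.toEuclideanLin S w = u := by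
        rw [hwdef, ← sophia_toEuclideanLin_mul_apply, hSinv', sophia_toEuclideanLin_one_apply]
      have hune : u ≠ 0 := hT.1.eigenvectorBasis.orthonormal.ne_zero i
      exact hune (by rw [← hu, h0, map_zero])
    have hb : ‖lam • w‖ ≤ 2 * ‖w‖ := by
      rw [← hw]
      calc ‖Matrix.toEuclideanLin (A⁻¹ * B) w‖
          = ‖(Matrix.toEuclideanLin (A⁻¹ * B)).toContinuousLinearMap w‖ := by
            rw [LinearMap.coe_toContinuousLinearMap']
        _ ≤ ‖(Matrix.toEuclideanLin (A⁻¹ * B)).toContinuousLinearMap‖ * ‖w‖ :=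
            (Matrix.toEuclideanLin (A⁻¹ * B)).toContinuousLinearMap.le_opNorm w
        _ ≤ 2 * ‖w‖ := mul_le_mul_of_nonneg_right h (norm_nonneg w)
    rw [norm_smul] at hb
    have hwpos : 0 < ‖w‖ := norm_pos_iff.mpr hwne
    have habs : |lam| ≤ 2 := by
      have := (mul_le_mul_iff_of_pos_right hwpos).mp hb
      simpa using this
    exact le_trans (le_abs_self lam) habs
  have hray := sophia_rayleigh_le hT.1 heig
  have hsymS := Matrix.isHermitian_iff_isSymmetric.mp hSH
  set x := Matrix.toEuclideanLin S v with hxdef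
  have e1 : ⟪v, Matrix.toEuclideanLin B v⟫_ℝ = ⟪x, Matrix.toEuclideanLin T x⟫_ℝ := by
    rw [hxdef, ← sophia_toEuclideanLin_mul_apply, hsymS]
    rw [← sophia_toEuclideanLin_mul_apply]
    congr 2
    rw [hTdef]
    exact congrArg _ (calc
        S * (S⁻¹ * B * S⁻¹ * S) = S * (S⁻¹ * B * (S⁻¹ * S)) := by noncomm_ring
      _ = B := by rw [hSinv, mul_one, ← mul_assoc, hSinv', one_mul] :
        S * (S⁻¹ * B * S⁻¹ * S) = B).symm
  have e2 : ‖x‖ ^ 2 = ⟪v, Matrix.toEuclideanLin A v⟫_ℝ := by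
    rw [← real_inner_self_eq_norm_sq, hxdef, hsymS, ← sophia_toEuclideanLin_mul_apply, hSS]
  rw [e1, ← e2]
  exact hray x

private lemma sophia_segment_lower
    (L : EuclideanSpace ℝ (Fin d) → ℝ)
    (grad : EuclideanSpace ℝ (Fin d) → EuclideanSpace ℝ (Fin d))
    (hess : EuclideanSpace ℝ (Fin d) → Matrix (Fin d) (Fin d) ℝ)
    (hgrad : ∀ θ, HasGradientAt L (grad θ) θ)
    (hhess : ∀ θ, HasFDerivAt grad ((Matrix.toEuclideanLin (hess θ)).toContinuousLinearMap) θ)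
    (θstar : EuclideanSpace ℝ (Fin d))
    (hmin : ∀ θ, L θstar ≤ L θ)
    (x : EuclideanSpace ℝ (Fin d))
    (c : ℝ)
    (hc : ∀ t ∈ Set.Icc (0:ℝ) 1,
      c ≤ ⟪x - θstar, Matrix.toEuclideanLin (hess (θstar + t • (x - θstar))) (x - θstar)⟫_ℝ) :
    c / 2 ≤ L x - L θstar := by
  set v := x - θstar with hv
  set γ : ℝ → EuclideanSpace ℝ (Fin d) := fun t => θstar + t • v with hγdef
  have hγ0 : γ 0 = θstar := by simp [hγdef]
  have hγ1 : γ 1 = x := by simp [hγdef, hv]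
  have hγ : ∀ t : ℝ, HasDerivAt γ v t := by
    intro t
    have h1 : HasDerivAt (fun s : ℝ => s • v) ((1:ℝ) • v) t := (hasDerivAt_id t).smul_const v
    simpa [hγdef] using h1.const_add θstar
  set G : ℝ → ℝ := fun t => ⟪v, grad (γ t)⟫_ℝ with hGdef
  have hG : ∀ t : ℝ, HasDerivAt G ⟪v, Matrix.toEuclideanLin (hess (γ t)) v⟫_ℝ t := by
    intro t
    have h1 : HasDerivAt (fun s => grad (γ s))
        ((Matrix.toEuclideanLin (hess (γ t))).toContinuousLinearMap v) t :=
      (hhess (γ t)).comp_hasDerivAt t (hγ t)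
    have h2 := (innerSL ℝ v).hasFDerivAt.comp_hasDerivAt t h1
    exact h2
  have hL' : ∀ t : ℝ, HasDerivAt (fun s => L (γ s)) (G t) t := by
    intro t
    have h1 := (hasGradientAt_iff_hasFDerivAt.mp (hgrad (γ t))).comp_hasDerivAt t (hγ t)
    have he : (InnerProductSpace.toDual ℝ _ (grad (γ t))) v = G t := by
      rw [InnerProductSpace.toDual_apply_apply, hGdef, real_inner_comm]
    rw [he] at h1
    exact h1
  have hG0 : G 0 = 0 := by
    have hloc : IsLocalMin L θstar := Filter.Eventually.of_forall hmin
    have hz := hloc.hasFDerivAt_eq_zero (hasGradientAt_iff_hasFDerivAt.mp (hgrad θstar))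
    have hzero : ⟪grad θstar, v⟫_ℝ = 0 := by
      have h2 : (InnerProductSpace.toDual ℝ _ (grad θstar)) v = 0 := by rw [hz]; rfl
      rwa [InnerProductSpace.toDual_apply_apply] at h2
    rw [hGdef]; simp only [hγ0]
    rw [real_inner_comm]; exact hzero
  set P : ℝ → ℝ := fun t => G t - c * t with hPdef
  have hP : ∀ t : ℝ, HasDerivAt P (⟪v, Matrix.toEuclideanLin (hess (γ t)) v⟫_ℝ - c) t := by
    intro t
    have h2 : HasDerivAt (fun s : ℝ => c * s) c t := by
      simpa using (hasDerivAt_id t).const_mul c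
    exact (hG t).sub h2
  have hPmono : MonotoneOn P (Set.Icc 0 1) := by
    apply monotoneOn_of_deriv_nonneg (convex_Icc 0 1)
    · exact Continuous.continuousOn (by
        have : Differentiable ℝ P := fun t => (hP t).differentiableAt
        exact this.continuous)
    · intro t _
      exact (hP t).differentiableAt.differentiableWithinAt
    · intro t ht
      rw [interior_Icc] at ht
      rw [(hP t).deriv]
      have := hc t ⟨le_of_lt ht.1, le_of_lt ht.2⟩
      linarith
  have hGt : ∀ t ∈ Set.Icc (0:ℝ) 1, c * t ≤ G t := by
    intro t ht
    have := hPmono ⟨le_refl 0, zero_le_one⟩ ht ht.1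
    simp only [hPdef] at this
    rw [hG0] at this
    simp at this
    linarith
  set Q : ℝ → ℝ := fun t => L (γ t) - c / 2 * t ^ 2 with hQdef
  have hQ : ∀ t : ℝ, HasDerivAt Q (G t - c * t) t := by
    intro t
    have h2 : HasDerivAt (fun s : ℝ => c / 2 * s ^ 2) (c * t) t := by
      have := (hasDerivAt_pow 2 t).const_mul (c / 2)
      refine this.congr_deriv ?_
      norm_num
      ring
    exact (hL' t).sub h2
  have hQmono : MonotoneOn Q (Set.Icc 0 1) := by
    apply monotoneOn_of_deriv_nonneg (convex_Icc 0 1)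
    · exact Continuous.continuousOn (by
        have : Differentiable ℝ Q := fun t => (hQ t).differentiableAt
        exact this.continuous)
    · intro t _
      exact (hQ t).differentiableAt.differentiableWithinAt
    · intro t ht
      rw [interior_Icc] at ht
      rw [(hQ t).deriv]
      have := hGt t ⟨le_of_lt ht.1, le_of_lt ht.2⟩
      linarith
  have := hQmono ⟨le_refl 0, zero_le_one⟩ ⟨zero_le_one, le_refl 1⟩ zero_le_one
  simp only [hQdef, hγ0, hγ1] at this
  norm_num at this
  linarith

end SophiaAux

/-- Small loss implies small distance to the minimizer
(Lemma 4.2 / `small_loss_imply_small_distance`). -/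
theorem sophia_small_loss_imply_small_distance
    (d : ℕ)
    (L : EuclideanSpace ℝ (Fin d) → ℝ)
    (grad : EuclideanSpace ℝ (Fin d) → EuclideanSpace ℝ (Fin d))
    (hess : EuclideanSpace ℝ (Fin d) → Matrix (Fin d) (Fin d) ℝ)
    (hC2 : ContDiff ℝ 2 L)
    (hgrad : ∀ θ, HasGradientAt L (grad θ) θ)
    (hhess : ∀ θ, HasFDerivAt grad ((Matrix.toEuclideanLin (hess θ)).toContinuousLinearMap) θ)
    (hconv : StrictConvexOn ℝ Set.univ L)
    (hpd : ∀ θ, (hess θ).PosDef)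
    (θstar : EuclideanSpace ℝ (Fin d))
    (hmin : ∀ θ, L θstar ≤ L θ)
    (μ : ℝ)
    (hμ : IsLeast {c : ℝ | ∃ v : EuclideanSpace ℝ (Fin d), ‖v‖ = 1 ∧
      Matrix.toEuclideanLin (hess θstar) v = c • v} μ)
    (R : ℝ) (hR : 0 < R)
    (hhessLip : ∀ θ θ' : EuclideanSpace ℝ (Fin d), ‖θ - θ'‖ ≤ R →
      ‖(Matrix.toEuclideanLin ((hess θ')⁻¹ * hess θ)).toContinuousLinearMap‖ ≤ 2)
    (θ : EuclideanSpace ℝ (Fin d))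
    (hloss : L θ - L θstar ≤ μ * R ^ 2 / 4) :
    ‖θ - θstar‖ ≤ 2 * Real.sqrt ((L θ - L θstar) / μ) ∧
    2 * Real.sqrt ((L θ - L θstar) / μ) ≤ R := by
  have hH : (hess θstar).IsHermitian := (hpd θstar).1
  -- μ is below every eigenvalue
  have hμlow : ∀ i, μ ≤ hH.eigenvalues i := fun i =>
    hμ.2 ⟨hH.eigenvectorBasis i, hH.eigenvectorBasis.orthonormal.1 i,
      sophia_toEuclideanLin_eigen hH i⟩
  -- μ is positive
  have hμpos : 0 < μ := by
    obtain ⟨v, hv1, hveq⟩ := hμ.1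
    have hvne : v ≠ 0 := fun h0 => by simp [h0] at hv1
    have hpos := sophia_inner_toEuclideanLin_pos (hpd θstar) hvne
    rw [hveq, real_inner_smul_right, real_inner_self_eq_norm_sq, hv1] at hpos
    simpa using hpos
  -- Rayleigh lower bound at θstar
  have hRay : ∀ w : EuclideanSpace ℝ (Fin d),
      μ * ‖w‖ ^ 2 ≤ ⟪w, Matrix.toEuclideanLin (hess θstar) w⟫_ℝ :=
    sophia_rayleigh_ge hH hμlow
  -- strong convexity within radius R
  have hkey : ∀ x : EuclideanSpace ℝ (Fin d), ‖x - θstar‖ ≤ R →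
      μ / 4 * ‖x - θstar‖ ^ 2 ≤ L x - L θstar := by
    intro x hx
    have hseg := sophia_segment_lower L grad hess hgrad hhess θstar hmin x
      (μ / 2 * ‖x - θstar‖ ^ 2) ?_
    · linarith
    · intro t ht
      set y := θstar + t • (x - θstar) with hy
      have hnorm : ‖θstar - y‖ ≤ R := by
        have : θstar - y = -(t • (x - θstar)) := by rw [hy]; abel
        rw [this, norm_neg, norm_smul, Real.norm_eq_abs, abs_of_nonneg ht.1]
        calc t * ‖x - θstar‖ ≤ 1 * ‖x - θstar‖ :=
              mul_le_mul_of_nonneg_right ht.2 (norm_nonneg _)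
          _ ≤ R := by rw [one_mul]; exact hx
      have hcomp := sophia_comparison (hpd y) (hpd θstar) (hhessLip θstar y hnorm) (x - θstar)
      have := hRay (x - θstar)
      linarith
  set Δ := L θ - L θstar with hΔ
  have hΔ0 : 0 ≤ Δ := by rw [hΔ]; linarith [hmin θ]
  -- second part
  have part2 : 2 * Real.sqrt (Δ / μ) ≤ R := by
    have h1 : Δ / μ ≤ (R / 2) ^ 2 := by
      rw [div_le_iff₀ hμpos]
      calc Δ ≤ μ * R ^ 2 / 4 := hloss
        _ = (R / 2) ^ 2 * μ := by ring
    have h2 : Real.sqrt (Δ / μ) ≤ R / 2 := by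
      calc Real.sqrt (Δ / μ) ≤ Real.sqrt ((R / 2) ^ 2) := Real.sqrt_le_sqrt h1
        _ = R / 2 := Real.sqrt_sq (by linarith)
    linarith
  refine ⟨?_, part2⟩
  by_cases hcase : ‖θ - θstar‖ ≤ R
  · have hk := hkey θ hcase
    rw [← hΔ] at hk
    have h1 : ‖θ - θstar‖ ^ 2 ≤ 4 * (Δ / μ) := by
      rw [show 4 * (Δ / μ) = 4 * Δ / μ by ring, le_div_iff₀ hμpos]
      nlinarith
    calc ‖θ - θstar‖ = Real.sqrt (‖θ - θstar‖ ^ 2) := (Real.sqrt_sq (norm_nonneg _)).symm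
      _ ≤ Real.sqrt (4 * (Δ / μ)) := Real.sqrt_le_sqrt h1
      _ = 2 * Real.sqrt (Δ / μ) := by
          rw [Real.sqrt_mul (by norm_num : (0:ℝ) ≤ 4),
            show Real.sqrt 4 = 2 by
              rw [show (4:ℝ) = 2 ^ 2 by norm_num, Real.sqrt_sq (by norm_num : (0:ℝ) ≤ 2)]]
  · exfalso
    push_neg at hcase
    set n := ‖θ - θstar‖ with hn
    have hnpos : 0 < n := lt_trans hR hcase
    set t := R / n with ht
    have ht0 : 0 ≤ t := le_of_lt (div_pos hR hnpos)
    have ht1 : t < 1 := (div_lt_one hnpos).mpr hcase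
    set θ'' := θstar + t • (θ - θstar) with hθ''
    have hnorm'' : ‖θ'' - θstar‖ = R := by
      have : θ'' - θstar = t • (θ - θstar) := by rw [hθ'']; abel
      rw [this, norm_smul, Real.norm_eq_abs, abs_of_nonneg ht0, ← hn, ht]
      field_simp
    have hk := hkey θ'' (le_of_eq hnorm'')
    rw [hnorm''] at hk
    -- convexity bound
    have hconvx : L θ'' ≤ (1 - t) * L θstar + t * L θ := by
      have hrepr : θ'' = (1 - t) • θstar + t • θ := by
        rw [hθ'', smul_sub, sub_smul, one_smul]; abel
      rw [hrepr]
      exact hconv.convexOn.2 (Set.mem_univ θstar) (Set.mem_univ θ)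
        (by linarith) ht0 (by ring)
    have h5 : μ * R ^ 2 / 4 ≤ t * Δ := by
      have : L θ'' - L θstar ≤ t * Δ := by rw [hΔ]; linarith
      linarith
    have h6 : t * Δ ≤ Δ := by nlinarith
    have h7 : μ * R ^ 2 / 4 ≤ Δ := le_trans h5 h6
    have hΔpos : 0 < Δ :=
      lt_of_lt_of_le (div_pos (mul_pos hμpos (by positivity)) (by norm_num)) h7
    have h8 : t * Δ < Δ := mul_lt_of_lt_one_left hΔpos ht1
    have h9 : μ * R ^ 2 / 4 < Δ := lt_of_le_of_lt h5 h8
    exact absurd hloss (not_le.mpr h9)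
end
end

section
/- Under the same assumptions (strict convexity, minimizer θ*, μ = λ_min(∇²L(θ*)), and multiplicative Hessian continuity at scale R), for any θ with ‖∇L(θ)‖₂ ≤ Rμ/2, it holds that ‖θ - θ*‖₂ ≤ 2‖∇L(θ)‖₂/μ ≤ R. -/
open scoped InnerProductSpace
open Matrix
noncomputable section

variable {d : ℕ}

lemma myToEuclideanLin_mul (A B : Matrix (Fin d) (Fin d) ℝ) (v : EuclideanSpace ℝ (Fin d)) :
    Matrix.toEuclideanLin (A * B) v = Matrix.toEuclideanLin A (Matrix.toEuclideanLin B v) := by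
  simp [Matrix.toEuclideanLin_apply, Matrix.mulVec_mulVec]

lemma myInv_apply {A : Matrix (Fin d) (Fin d) ℝ} (hA : A.PosDef)
    (y : EuclideanSpace ℝ (Fin d)) :
    Matrix.toEuclideanLin A (Matrix.toEuclideanLin A⁻¹ y) = y := by
  rw [← myToEuclideanLin_mul, Matrix.mul_nonsing_inv _ hA.det_pos.ne'.isUnit]
  ext i; simp [Matrix.toEuclideanLin_apply]

lemma myInner_toEuclideanLin_pos {A : Matrix (Fin d) (Fin d) ℝ} (hA : A.PosDef)
    {x : EuclideanSpace ℝ (Fin d)} (hx : x ≠ 0) :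
    0 < ⟪Matrix.toEuclideanLin A x, x⟫_ℝ := by
  have h := hA.dotProduct_mulVec_pos (x := WithLp.equiv 2 _ x) (by simpa using hx)
  rw [real_inner_comm]
  simpa [Matrix.toEuclideanLin_apply, PiLp.inner_apply, dotProduct, mul_comm] using h

lemma mySpectral_lower {A : Matrix (Fin d) (Fin d) ℝ} (hA : A.IsHermitian) {μ : ℝ}
    (hμ : ∀ c ∈ {c : ℝ | ∃ v : EuclideanSpace ℝ (Fin d), ‖v‖ = 1 ∧
      Matrix.toEuclideanLin A v = c • v}, μ ≤ c)
    (x : EuclideanSpace ℝ (Fin d)) :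
    μ * ‖x‖ ^ 2 ≤ ⟪Matrix.toEuclideanLin A x, x⟫_ℝ := by
  classical
  set b := hA.eigenvectorBasis with hb
  have hsym : LinearMap.IsSymmetric (Matrix.toEuclideanLin A) :=
    Matrix.isHermitian_iff_isSymmetric.mp hA
  have heig : ∀ j, Matrix.toEuclideanLin A (b j) = hA.eigenvalues j • b j := by
    intro j
    have := hA.mulVec_eigenvectorBasis j
    ext i
    have := congrFun this i
    simpa [Matrix.toEuclideanLin_apply] using this
  have hval : ∀ j, μ ≤ hA.eigenvalues j := by
    intro j
    exact hμ _ ⟨b j, b.orthonormal.1 j, heig j⟩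
  have hexp : ⟪Matrix.toEuclideanLin A x, x⟫_ℝ
      = ∑ j, hA.eigenvalues j * (⟪x, b j⟫_ℝ * ⟪b j, x⟫_ℝ) := by
    rw [← b.sum_inner_mul_inner (Matrix.toEuclideanLin A x) x]
    congr 1; ext j
    rw [hsym, heig j, real_inner_smul_right]
    ring
  have hnorm : ‖x‖ ^ 2 = ∑ j, ⟪x, b j⟫_ℝ * ⟪b j, x⟫_ℝ := by
    rw [b.sum_inner_mul_inner x x, real_inner_self_eq_norm_sq]
  rw [hexp, hnorm, Finset.mul_sum]
  apply Finset.sum_le_sum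
  intro j _
  have hnn : 0 ≤ ⟪x, b j⟫_ℝ * ⟪b j, x⟫_ℝ := by
    rw [real_inner_comm x (b j)]
    exact mul_self_nonneg _
  exact mul_le_mul_of_nonneg_right (hval j) hnn

lemma myInv_norm_le {A : Matrix (Fin d) (Fin d) ℝ} (hA : A.PosDef) {c : ℝ} (hc : 0 < c)
    (h : ∀ x : EuclideanSpace ℝ (Fin d), c * ‖x‖ ^ 2 ≤ ⟪Matrix.toEuclideanLin A x, x⟫_ℝ)
    (y : EuclideanSpace ℝ (Fin d)) :
    ‖Matrix.toEuclideanLin A⁻¹ y‖ ≤ ‖y‖ / c := by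
  set x := Matrix.toEuclideanLin A⁻¹ y with hx
  have hAx : Matrix.toEuclideanLin A x = y := myInv_apply hA y
  have h1 := h x
  rw [hAx] at h1
  have h2 : ⟪y, x⟫_ℝ ≤ ‖y‖ * ‖x‖ := real_inner_le_norm y x
  rcases eq_or_ne x 0 with h0 | h0
  · rw [h0, norm_zero]
    positivity
  · have hxpos : 0 < ‖x‖ := norm_pos_iff.mpr h0
    rw [le_div_iff₀ hc]
    nlinarith

lemma myCoercive_of_inv_norm {A : Matrix (Fin d) (Fin d) ℝ} (hA : A.PosDef)
    (hinv : ∀ y, Matrix.toEuclideanLin A (Matrix.toEuclideanLin A⁻¹ y) = y)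
    {k : ℝ} (hk : 0 < k)
    (h : ∀ y : EuclideanSpace ℝ (Fin d), ‖Matrix.toEuclideanLin A⁻¹ y‖ ≤ k * ‖y‖)
    (x : EuclideanSpace ℝ (Fin d)) :
    ‖x‖ ^ 2 / k ≤ ⟪Matrix.toEuclideanLin A x, x⟫_ℝ := by
  set T := Matrix.toEuclideanLin A with hT
  have hsym : LinearMap.IsSymmetric T := Matrix.isHermitian_iff_isSymmetric.mp hA.1
  rcases eq_or_ne x 0 with h0 | h0
  · simp [h0]
  have hpos : 0 < ⟪T x, x⟫_ℝ := myInner_toEuclideanLin_pos hA h0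
  set u := Matrix.toEuclideanLin A⁻¹ x with hu
  have hTu : T u = x := hinv x
  have hbux : ⟪T u, x⟫_ℝ = ‖x‖ ^ 2 := by rw [hTu, real_inner_self_eq_norm_sq]
  have hbuu : ⟪T u, u⟫_ℝ ≤ k * ‖x‖ ^ 2 := by
    have h1 : ⟪T u, u⟫_ℝ = ⟪x, u⟫_ℝ := by rw [hTu]
    have h2 : ⟪x, u⟫_ℝ ≤ ‖x‖ * ‖u‖ := real_inner_le_norm x u
    have h3 : ‖u‖ ≤ k * ‖x‖ := h x
    have h4 : ‖x‖ * ‖u‖ ≤ ‖x‖ * (k * ‖x‖) :=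
      mul_le_mul_of_nonneg_left h3 (norm_nonneg x)
    rw [h1]; nlinarith [norm_nonneg x]
  have hCS : ∀ t : ℝ, 0 ≤ ⟪T u, u⟫_ℝ - 2 * t * ⟪T u, x⟫_ℝ + t ^ 2 * ⟪T x, x⟫_ℝ := by
    intro t
    have hnn : 0 ≤ ⟪T (u - t • x), u - t • x⟫_ℝ := by
      rcases eq_or_ne (u - t • x) 0 with hz | hz
      · simp [hz]
      · exact le_of_lt (myInner_toEuclideanLin_pos hA hz)
    have hexp : ⟪T (u - t • x), u - t • x⟫_ℝ
        = ⟪T u, u⟫_ℝ - 2 * t * ⟪T u, x⟫_ℝ + t ^ 2 * ⟪T x, x⟫_ℝ := by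
      have hsymux : ⟪T x, u⟫_ℝ = ⟪T u, x⟫_ℝ := by
        rw [hsym x u, real_inner_comm]
      rw [map_sub, LinearMap.map_smul, inner_sub_left, inner_sub_right, inner_sub_right,
        real_inner_smul_left, inner_smul_right_eq_smul, inner_smul_right_eq_smul,
        real_inner_smul_left]
      simp only [smul_eq_mul]
      rw [hsymux]
      ring
    rw [← hexp]; exact hnn
  have hdisc := discrim_le_zero (a := ⟪T x, x⟫_ℝ) (b := -2 * ⟪T u, x⟫_ℝ) (c := ⟪T u, u⟫_ℝ)
    (fun t => by nlinarith [hCS t])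
  rw [discrim] at hdisc
  have key : ⟪T u, x⟫_ℝ ^ 2 ≤ ⟪T u, u⟫_ℝ * ⟪T x, x⟫_ℝ := by nlinarith
  rw [div_le_iff₀ hk]
  have hx2 : 0 < ‖x‖ ^ 2 := pow_pos (norm_pos_iff.mpr h0) 2
  nlinarith [key, hbuu, hpos, mul_pos hx2 hpos]

set_option maxHeartbeats 1000000 in
/-- Small gradient implies small distance to the minimizer. -/
theorem sophia_small_gradient_imply_small_distance
    (d : ℕ)
    (L : EuclideanSpace ℝ (Fin d) → ℝ)
    (grad : EuclideanSpace ℝ (Fin d) → EuclideanSpace ℝ (Fin d))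
    (hess : EuclideanSpace ℝ (Fin d) → Matrix (Fin d) (Fin d) ℝ)
    (hC2 : ContDiff ℝ 2 L)
    (hgrad : ∀ θ, HasGradientAt L (grad θ) θ)
    (hhess : ∀ θ, HasFDerivAt grad ((Matrix.toEuclideanLin (hess θ)).toContinuousLinearMap) θ)
    (hconv : StrictConvexOn ℝ Set.univ L)
    (hpd : ∀ θ, (hess θ).PosDef)
    (θstar : EuclideanSpace ℝ (Fin d))
    (hmin : ∀ θ, L θstar ≤ L θ)
    (μ : ℝ)
    (hμ : IsLeast {c : ℝ | ∃ v : EuclideanSpace ℝ (Fin d), ‖v‖ = 1 ∧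
      Matrix.toEuclideanLin (hess θstar) v = c • v} μ)
    (R : ℝ) (hR : 0 < R)
    (hhessLip : ∀ θ θ' : EuclideanSpace ℝ (Fin d), ‖θ - θ'‖ ≤ R →
      ‖(Matrix.toEuclideanLin ((hess θ')⁻¹ * hess θ)).toContinuousLinearMap‖ ≤ 2)
    (θ : EuclideanSpace ℝ (Fin d))
    (hgradsmall : ‖grad θ‖ ≤ R * μ / 2) :
    ‖θ - θstar‖ ≤ 2 * ‖grad θ‖ / μ ∧ 2 * ‖grad θ‖ / μ ≤ R := by
  -- μ > 0
  obtain ⟨v, hv1, hv2⟩ := hμ.1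
  have hv0 : v ≠ 0 := by
    intro h; rw [h] at hv1; simp at hv1
  have hμpos : 0 < μ := by
    have h := myInner_toEuclideanLin_pos (hpd θstar) hv0
    rw [hv2, real_inner_smul_left, real_inner_self_eq_norm_sq, hv1] at h
    simpa using h
  have hsecond : 2 * ‖grad θ‖ / μ ≤ R := by
    rw [div_le_iff₀ hμpos]; linarith
  refine ⟨?_, hsecond⟩
  -- gradient at minimizer is zero
  have hgrad0 : grad θstar = 0 := by
    have hloc : IsLocalMin L θstar := Filter.Eventually.of_forall hmin
    have h := hloc.hasFDerivAt_eq_zero (hgrad θstar).hasFDerivAt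
    have h2 := congrArg (InnerProductSpace.toDual ℝ (EuclideanSpace ℝ (Fin d))).symm h
    simpa using h2
  -- coercivity of the Hessian near θstar
  have hlowstar := mySpectral_lower (hpd θstar).1 hμ.2
  have hlowstar' : ∀ x : EuclideanSpace ℝ (Fin d),
      ‖Matrix.toEuclideanLin (hess θstar)⁻¹ x‖ ≤ ‖x‖ / μ :=
    myInv_norm_le (hpd θstar) hμpos hlowstar
  have hcoer : ∀ ψ : EuclideanSpace ℝ (Fin d), ‖θstar - ψ‖ ≤ R →
      ∀ x : EuclideanSpace ℝ (Fin d),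
        μ / 2 * ‖x‖ ^ 2 ≤ ⟪Matrix.toEuclideanLin (hess ψ) x, x⟫_ℝ := by
    intro ψ hψR x
    have hnormC := hhessLip θstar ψ hψR
    have hinvψ : ∀ y : EuclideanSpace ℝ (Fin d),
        ‖Matrix.toEuclideanLin (hess ψ)⁻¹ y‖ ≤ (2 / μ) * ‖y‖ := by
      intro y
      have hre : Matrix.toEuclideanLin (hess ψ)⁻¹ y
          = Matrix.toEuclideanLin ((hess ψ)⁻¹ * hess θstar)
              (Matrix.toEuclideanLin (hess θstar)⁻¹ y) := by
        rw [myToEuclideanLin_mul, myInv_apply (hpd θstar)]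
      rw [hre]
      calc ‖Matrix.toEuclideanLin ((hess ψ)⁻¹ * hess θstar)
              (Matrix.toEuclideanLin (hess θstar)⁻¹ y)‖
          = ‖(Matrix.toEuclideanLin ((hess ψ)⁻¹ * hess θstar)).toContinuousLinearMap
              (Matrix.toEuclideanLin (hess θstar)⁻¹ y)‖ := by
            rw [LinearMap.coe_toContinuousLinearMap']
        _ ≤ ‖(Matrix.toEuclideanLin ((hess ψ)⁻¹ * hess θstar)).toContinuousLinearMap‖
              * ‖Matrix.toEuclideanLin (hess θstar)⁻¹ y‖ :=
            ContinuousLinearMap.le_opNorm _ _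
        _ ≤ 2 * (‖y‖ / μ) := by
            apply mul_le_mul hnormC (hlowstar' y) (norm_nonneg _) (by norm_num)
        _ = (2 / μ) * ‖y‖ := by ring
    have h := myCoercive_of_inv_norm (hpd ψ) (myInv_apply (hpd ψ))
      (by positivity : (0:ℝ) < 2 / μ) hinvψ x
    calc μ / 2 * ‖x‖ ^ 2 = ‖x‖ ^ 2 / (2 / μ) := by field_simp
      _ ≤ _ := h
  -- main argument
  rcases eq_or_ne θ θstar with heq | hne
  · rw [heq, sub_self, norm_zero]
    positivity
  have hu0 : θ - θstar ≠ 0 := sub_ne_zero_of_ne hne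
  set r := ‖θ - θstar‖ with hr
  have hrpos : 0 < r := norm_pos_iff.mpr hu0
  set e : EuclideanSpace ℝ (Fin d) := r⁻¹ • (θ - θstar) with he
  have hen : ‖e‖ = 1 := by
    rw [he, norm_smul, norm_inv, norm_norm, ← hr, inv_mul_cancel₀ hrpos.ne']
  have he0 : e ≠ 0 := by
    intro h; rw [h] at hen; simp at hen
  set γ : ℝ → EuclideanSpace ℝ (Fin d) := fun t => θstar + t • e with hγ
  have hγ0 : γ 0 = θstar := by simp [hγ]
  have hγr : γ r = θ := by
    rw [hγ]
    simp only [he, smul_smul, mul_inv_cancel₀ hrpos.ne', one_smul]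
    abel
  have hdist : ∀ t : ℝ, ‖θstar - γ t‖ = |t| := by
    intro t
    simp [hγ, norm_smul, hen, abs_eq_self.mpr]
  set g : ℝ → ℝ := fun t => ⟪grad (γ t), e⟫_ℝ with hg
  have hderiv : ∀ t : ℝ, HasDerivAt g
      (⟪Matrix.toEuclideanLin (hess (γ t)) e, e⟫_ℝ) t := by
    intro t
    have hγ' : HasDerivAt γ e t := by
      have h := ((hasDerivAt_id t).smul_const e).const_add θstar
      rw [one_smul] at h
      exact h
    have hcomp : HasDerivAt (fun s => grad (γ s))
        ((Matrix.toEuclideanLin (hess (γ t))).toContinuousLinearMap e) t :=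
      (hhess (γ t)).comp_hasDerivAt t hγ'
    have h := hcomp.inner ℝ (hasDerivAt_const t e)
    simpa using h
  have hdiff : Differentiable ℝ g := fun t => (hderiv t).differentiableAt
  have hcont : Continuous g := hdiff.continuous
  have hg0 : g 0 = 0 := by simp [hg, hγ0, hgrad0]
  have hgr : g r = ⟪grad θ, e⟫_ℝ := by rw [hg]; simp only [hγr]
  have hgrle : g r ≤ ‖grad θ‖ := by
    rw [hgr]
    calc ⟪grad θ, e⟫_ℝ ≤ ‖grad θ‖ * ‖e‖ := real_inner_le_norm _ _
      _ = ‖grad θ‖ := by rw [hen, mul_one]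
  have claim1 : ∀ s : ℝ, 0 ≤ s → s ≤ R → μ / 2 * s ≤ g s := by
    intro s hs0 hsR
    have h := Convex.mul_sub_le_image_sub_of_le_deriv (convex_Icc 0 R)
      hcont.continuousOn hdiff.differentiableOn
      (fun x hx => by
        rw [interior_Icc] at hx
        rw [(hderiv x).deriv]
        have := hcoer (γ x) (by rw [hdist x, abs_of_pos hx.1]; exact le_of_lt hx.2) e
        rw [hen] at this
        simpa using this)
      0 ⟨le_refl _, le_of_lt hR⟩ s ⟨hs0, hsR⟩ hs0
    rw [hg0] at h
    linarith
  by_cases hrR : r ≤ R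
  · -- conclusion
    have h1 := claim1 r (le_of_lt hrpos) hrR
    rw [le_div_iff₀ hμpos]
    nlinarith [hgrle]
  · exfalso
    push_neg at hrR
    have hgR : μ / 2 * R ≤ g R := claim1 R (le_of_lt hR) (le_refl R)
    have hmono : StrictMonoOn g (Set.Icc R r) :=
      strictMonoOn_of_deriv_pos (convex_Icc R r) hcont.continuousOn
        (fun x hx => by
          rw [(hderiv x).deriv]
          exact myInner_toEuclideanLin_pos (hpd (γ x)) he0)
    have hlt : g R < g r :=
      hmono ⟨le_refl R, le_of_lt hrR⟩ ⟨le_of_lt hrR, le_refl r⟩ hrR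
    nlinarith [hgrle, hgradsmall]
end
end

section
/- Let L: ℝ^d → ℝ be twice continuously differentiable and strictly convex with minimizer θ*. For any initial point θ, the ODE dθ(t)/dt = -(∇²L(θ(t)))⁻¹ ∇L(θ) with θ(0) = θ has a solution on [0,1], and along this solution ∇L(θ(t)) = (1-t)∇L(θ) for all t ∈ [0,1], and θ(1) = θ*. -/
set_option maxHeartbeats 1000000

open scoped InnerProductSpace
open Matrix
noncomputable section

variable {d : ℕ}

local notation "E" => EuclideanSpace ℝ (Fin d)

/-- first-order gradient inequality for convex functions -/
lemma grad_ineq_aux {f : E → ℝ} (hconv : ConvexOn ℝ Set.univ f) {x v : E}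
    (hf : HasGradientAt f v x) (y : E) : f x + ⟪v, y - x⟫_ℝ ≤ f y := by
  rcases eq_or_ne y x with rfl | hne
  · simp
  · set φ : ℝ → ℝ := fun s => f (x + s • (y - x)) with hφ
    have hφconv : ConvexOn ℝ Set.univ φ := by
      have := hconv.comp_affineMap (AffineMap.lineMap x y : ℝ →ᵃ[ℝ] E)
      have heq : φ = f ∘ (AffineMap.lineMap x y : ℝ →ᵃ[ℝ] E) := by
        funext s
        simp [hφ, AffineMap.lineMap_apply, Function.comp, add_comm]
      rw [heq]
      simpa using this
    have hline : HasDerivAt (fun s : ℝ => x + s • (y - x)) (y - x) (0 : ℝ) := by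
      simpa using ((hasDerivAt_id (0:ℝ)).smul_const (y - x)).const_add x
    have hder : HasDerivAt φ ⟪v, y - x⟫_ℝ 0 := by
      have hf' : HasFDerivAt f ((InnerProductSpace.toDual ℝ E) v) ((fun s : ℝ => x + s • (y - x)) 0) := by
        simpa using hf.hasFDerivAt
      have := (hf'.comp_hasDerivAt 0 hline)
      simpa [hφ, Function.comp_def, InnerProductSpace.toDual_apply_apply] using this
    have hslope := hφconv.le_slope_of_hasDerivAt (Set.mem_univ (0:ℝ)) (Set.mem_univ (1:ℝ))
      one_pos hder
    have : ⟪v, y - x⟫_ℝ ≤ φ 1 - φ 0 := by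
      simpa [slope_def_field, hφ] using hslope
    have h0 : φ 0 = f x := by simp [hφ]
    have h1 : φ 1 = f y := by simp [hφ]
    linarith [this, h0.symm ▸ h1 ▸ this]

/-- uniqueness of minimizer of strictly convex function -/
lemma unique_min_aux {f : E → ℝ} (hs : StrictConvexOn ℝ Set.univ f) {x y : E}
    (hx : ∀ z, f x ≤ f z) (hy : ∀ z, f y ≤ f z) : x = y := by
  by_contra hne
  have h := hs.2 (Set.mem_univ x) (Set.mem_univ y) hne (by norm_num : (0:ℝ) < 1/2)
    (by norm_num : (0:ℝ) < 1/2) (by norm_num)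
  have hxy : f x = f y := le_antisymm (hx y) (hy x)
  have := hx ((1/2:ℝ) • x + (1/2:ℝ) • y)
  rw [hxy] at h
  simp only [smul_eq_mul] at h
  nlinarith [h, this, hxy]

/-- a strictly convex continuous function with an attained minimum grows at least linearly -/
lemma coercive_aux {f : E → ℝ} (hs : StrictConvexOn ℝ Set.univ f) (hc : Continuous f)
    {a : E} (ha : ∀ z, f a ≤ f z) :
    ∃ m : ℝ, 0 < m ∧ ∀ x, f a - m + m * ‖x - a‖ ≤ f x := by
  rcases (Metric.sphere a 1).eq_empty_or_nonempty with hS | hS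
  · refine ⟨1, one_pos, fun x => ?_⟩
    have hx : x ∉ Metric.sphere a 1 := by rw [hS]; exact Set.notMem_empty x
    -- the space is a subsingleton iff the sphere is empty; instead argue directly:
    -- every point of norm difference 1 would be on the sphere
    have hxa : x = a := by
      by_contra hne
      have hpos : 0 < ‖x - a‖ := by
        simpa [sub_eq_zero] using norm_sub_pos_iff.mpr hne
      have : a + (‖x - a‖)⁻¹ • (x - a) ∈ Metric.sphere a 1 := by
        simp [Metric.mem_sphere, dist_eq_norm, norm_smul, abs_of_pos (inv_pos.mpr hpos),
          inv_mul_cancel₀ hpos.ne']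
      rw [hS] at this; exact Set.notMem_empty _ this
    simp [hxa]
  · obtain ⟨u, huS, humin⟩ :=
      (isCompact_sphere a 1).exists_isMinOn hS hc.continuousOn
    have hu1 : ‖u - a‖ = 1 := by simpa [dist_eq_norm] using huS
    set m : ℝ := f u - f a with hm
    have hmpos : 0 < m := by
      rcases lt_or_eq_of_le (ha u) with h | h
      · simpa [hm] using sub_pos.mpr h
      · exfalso
        have hueq : u = a := by
          refine unique_min_aux hs (fun z => ?_) ha
          rw [← h]; exact ha z
        rw [hueq] at hu1; simp at hu1
    refine ⟨m, hmpos, fun x => ?_⟩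
    rcases le_or_gt ‖x - a‖ 1 with hle | hgt
    · nlinarith [ha x, hmpos]
    · set r : ℝ := ‖x - a‖ with hr
      have hrpos : (0:ℝ) < r := lt_trans one_pos hgt
      set w : E := a + r⁻¹ • (x - a) with hw
      have hwS : w ∈ Metric.sphere a 1 := by
        have : ‖x - a‖ = r := hr.symm
        simp [hw, Metric.mem_sphere, dist_eq_norm, norm_smul, abs_of_pos hrpos,
          this, inv_mul_cancel₀ hrpos.ne']
      have hfw : f u ≤ f w := humin hwS
      -- convexity: w = (1 - r⁻¹) • a + r⁻¹ • x
      have hcomb : w = (1 - r⁻¹) • a + r⁻¹ • x := by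
        rw [hw]; module
      have hinv1 : r⁻¹ < 1 := by
        rw [inv_lt_one_iff₀]; right; exact hgt
      have hinvpos : (0:ℝ) < r⁻¹ := inv_pos.mpr hrpos
      have hconvw : f w ≤ (1 - r⁻¹) * f a + r⁻¹ * f x := by
        have := hs.convexOn.2 (Set.mem_univ a) (Set.mem_univ x)
          (by linarith : (0:ℝ) ≤ 1 - r⁻¹) (le_of_lt hinvpos) (by ring)
        rw [hcomb]
        simpa [smul_eq_mul] using this
      -- combine: f x ≥ f a + r * m
      have key : f a + r * m ≤ f x := by
        have h1 : f a + m ≤ f w := by rw [hm]; linarith [hfw]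
        have h2 : (1 - r⁻¹) * f a + r⁻¹ * f x ≥ f a + m := le_trans h1 hconvw
        have h3 : r⁻¹ * f x ≥ r⁻¹ * f a + m := by linarith
        have := mul_le_mul_of_nonneg_left h3 (le_of_lt hrpos)
        have hrr : r * r⁻¹ = 1 := mul_inv_cancel₀ hrpos.ne'
        nlinarith [this, hrr]
      nlinarith [key, hmpos]


/-- minimum existence for linearly-coercive continuous functions -/
lemma exists_min_aux {f : E → ℝ} (hc : Continuous f) {c m : ℝ} (hm : 0 < m)
    (hbound : ∀ x, c + m * ‖x‖ ≤ f x) : ∃ x, ∀ y, f x ≤ f y := by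
  have htend : Filter.Tendsto f (Filter.cocompact _) Filter.atTop := by
    refine Filter.tendsto_atTop_mono hbound ?_
    have h1 : Filter.Tendsto (fun x : E => ‖x‖) (Filter.cocompact _) Filter.atTop :=
      tendsto_norm_cocompact_atTop
    exact Filter.tendsto_atTop_add_const_left _ c
      (h1.const_mul_atTop hm)
  exact hc.exists_forall_le' (x₀ := 0) (by
    filter_upwards [htend.eventually_ge_atTop (f 0)] with x hx using hx)

/-- linear functionals are convex -/
lemma linear_convexOn_aux (w : E) (c : ℝ) :
    ConvexOn ℝ Set.univ (fun x : E => c * ⟪w, x⟫_ℝ) := by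
  refine ⟨convex_univ, fun x _ y _ a b _ _ hab => ?_⟩
  simp only [inner_add_right, real_inner_smul_right, smul_eq_mul]
  ring_nf
  nlinarith [hab]

lemma toEuclideanLin_comp_aux (A B : Matrix (Fin d) (Fin d) ℝ) :
    (Matrix.toEuclideanLin A).comp (Matrix.toEuclideanLin B) = Matrix.toEuclideanLin (A * B) := by
  ext v
  simp [Matrix.toEuclideanLin_apply, Matrix.mulVec_mulVec]

lemma posdef_inv_comp (A : Matrix (Fin d) (Fin d) ℝ) (hA : A.PosDef) :
    (Matrix.toEuclideanLin A).comp (Matrix.toEuclideanLin A⁻¹) = LinearMap.id ∧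
    (Matrix.toEuclideanLin A⁻¹).comp (Matrix.toEuclideanLin A) = LinearMap.id := by
  have hdet : IsUnit A.det := isUnit_iff_ne_zero.mpr hA.det_pos.ne'
  constructor
  · rw [toEuclideanLin_comp_aux, Matrix.mul_nonsing_inv A hdet]
    ext v; simp [Matrix.toEuclideanLin_apply]
  · rw [toEuclideanLin_comp_aux, Matrix.nonsing_inv_mul A hdet]
    ext v; simp [Matrix.toEuclideanLin_apply]

/-- continuous linear equivalence from a positive definite matrix -/
def posDefCLE (A : Matrix (Fin d) (Fin d) ℝ) (hA : A.PosDef) : E ≃L[ℝ] E :=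
  LinearEquiv.toContinuousLinearEquiv
    (LinearEquiv.ofLinear (Matrix.toEuclideanLin A) (Matrix.toEuclideanLin A⁻¹)
      (posdef_inv_comp A hA).1 (posdef_inv_comp A hA).2)

lemma posDefCLE_coe (A : Matrix (Fin d) (Fin d) ℝ) (hA : A.PosDef) :
    (posDefCLE A hA : E →L[ℝ] E) = (Matrix.toEuclideanLin A).toContinuousLinearMap := by
  ext v
  rfl

lemma posDefCLE_symm_apply (A : Matrix (Fin d) (Fin d) ℝ) (hA : A.PosDef) (v : E) :
    (posDefCLE A hA).symm v = Matrix.toEuclideanLin A⁻¹ v := rfl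

lemma hasGradientAt_sub_aux {f h : E → ℝ} {v w x : E}
    (hf : HasGradientAt f v x) (hh : HasGradientAt h w x) :
    HasGradientAt (fun y => f y - h y) (v - w) x := by
  rw [hasGradientAt_iff_hasFDerivAt] at *
  rw [map_sub]; exact hf.sub hh

/-- The Newton-flow-type ODE `dθ(t)/dt = -(∇²L(θ(t)))⁻¹ ∇L(θ(0))` with `θ(0) = θ` has a
solution on `[0,1]`, along which `∇L(θ(t)) = (1-t) ∇L(θ)`, and `θ(1) = θ*`. -/
theorem sophia_soln_existence_mirror_ode
    (d : ℕ)
    (L : EuclideanSpace ℝ (Fin d) → ℝ)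
    (grad : EuclideanSpace ℝ (Fin d) → EuclideanSpace ℝ (Fin d))
    (hess : EuclideanSpace ℝ (Fin d) → Matrix (Fin d) (Fin d) ℝ)
    (hC2 : ContDiff ℝ 2 L)
    (hgrad : ∀ θ, HasGradientAt L (grad θ) θ)
    (hhess : ∀ θ, HasFDerivAt grad ((Matrix.toEuclideanLin (hess θ)).toContinuousLinearMap) θ)
    (hconv : StrictConvexOn ℝ Set.univ L)
    (hpd : ∀ θ, (hess θ).PosDef)
    (θstar : EuclideanSpace ℝ (Fin d))
    (hmin : ∀ θ, L θstar ≤ L θ)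
    (θ : EuclideanSpace ℝ (Fin d)) :
    ∃ γ : ℝ → EuclideanSpace ℝ (Fin d),
      γ 0 = θ ∧
      (∀ t ∈ Set.Icc (0 : ℝ) 1,
        HasDerivAt γ (-(Matrix.toEuclideanLin (hess (γ t))⁻¹ (grad θ))) t) ∧
      (∀ t ∈ Set.Icc (0 : ℝ) 1, grad (γ t) = (1 - t) • grad θ) ∧
      γ 1 = θstar := by
  classical
  set g := grad θ with hg
  -- gradient of the linear functional ⟪w, ·⟫
  have hinner : ∀ (w x : EuclideanSpace ℝ (Fin d)),
      HasGradientAt (fun y : EuclideanSpace ℝ (Fin d) => ⟪w, y⟫_ℝ) w x := by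
    intro w x
    rw [hasGradientAt_iff_hasFDerivAt]
    have heq : (fun y : EuclideanSpace ℝ (Fin d) => ⟪w, y⟫_ℝ)
        = ⇑(InnerProductSpace.toDual ℝ (EuclideanSpace ℝ (Fin d)) w) := by
      funext y; simp [InnerProductSpace.toDual_apply_apply]
    rw [heq]
    exact (InnerProductSpace.toDual ℝ (EuclideanSpace ℝ (Fin d)) w).hasFDerivAt
  -- gradient vanishes at a global minimum
  have hgradzero : ∀ (f : EuclideanSpace ℝ (Fin d) → ℝ) (v x : EuclideanSpace ℝ (Fin d)),
      HasGradientAt f v x → (∀ z, f x ≤ f z) → v = 0 := by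
    intro f v x hv hxmin
    have hloc : IsLocalMin f x := by
      have : IsMinOn f Set.univ x := fun z _ => hxmin z
      exact this.isLocalMin Filter.univ_mem
    have h0 := hloc.hasFDerivAt_eq_zero hv.hasFDerivAt
    apply (InnerProductSpace.toDual ℝ (EuclideanSpace ℝ (Fin d))).injective
    simp [h0]
  -- strict convexity of L minus a linear functional
  have hstrictLt : ∀ c : ℝ, StrictConvexOn ℝ Set.univ
      (fun x : EuclideanSpace ℝ (Fin d) => L x - c * ⟪g, x⟫_ℝ) := by
    intro c
    have := hconv.add_convexOn (linear_convexOn_aux g (-c))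
    have heq : (fun x : EuclideanSpace ℝ (Fin d) => L x - c * ⟪g, x⟫_ℝ)
        = fun x => L x + (-c) * ⟪g, x⟫_ℝ := by funext x; ring
    rw [heq]; exact this
  -- injectivity of grad
  have inj : Function.Injective grad := by
    intro x y hxy
    set f : EuclideanSpace ℝ (Fin d) → ℝ := fun z => L z - ⟪grad x, z⟫_ℝ with hf
    have hsc : StrictConvexOn ℝ Set.univ f := by
      have := hconv.add_convexOn (linear_convexOn_aux (grad x) (-1))
      have heq : f = fun z => L z + (-1) * ⟪grad x, z⟫_ℝ := by funext z; simp [hf]; ring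
      rw [heq]; exact this
    have hgradf : ∀ z, HasGradientAt f (grad z - grad x) z := by
      intro z
      exact hasGradientAt_sub_aux (hgrad z) (hinner (grad x) z)
    have hminx : ∀ z, f x ≤ f z := by
      intro z
      have := grad_ineq_aux hsc.convexOn (by simpa [sub_self] using hgradf x) z
      simpa using this
    have hminy : ∀ z, f y ≤ f z := by
      intro z
      have h0 : HasGradientAt f 0 y := by simpa [← hxy, sub_self] using hgradf y
      have := grad_ineq_aux hsc.convexOn h0 z
      simpa using this
    exact unique_min_aux hsc hminx hminy
  -- gradient of θstar is zero
  have hgradstar : grad θstar = 0 := hgradzero L (grad θstar) θstar (hgrad θstar) hmin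
  -- L₀ = L - ⟪g, ·⟫ has a minimum at θ
  set L₀ : EuclideanSpace ℝ (Fin d) → ℝ := fun x => L x - ⟪g, x⟫_ℝ with hL₀
  have hL₀sc : StrictConvexOn ℝ Set.univ L₀ := by
    have := hstrictLt 1
    simpa [hL₀] using this
  have hL₀grad : ∀ z, HasGradientAt L₀ (grad z - g) z :=
    fun z => hasGradientAt_sub_aux (hgrad z) (hinner g z)
  have hL₀min : ∀ z, L₀ θ ≤ L₀ z := by
    intro z
    have := grad_ineq_aux hL₀sc.convexOn (by simpa [hg, sub_self] using hL₀grad θ) z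
    simpa using this
  have hL₀cont : Continuous L₀ := by
    apply hC2.continuous.sub
    exact continuous_const.inner continuous_id
  -- coercivity constants
  obtain ⟨m₀, hm₀, hb₀⟩ := coercive_aux hL₀sc hL₀cont hL₀min
  obtain ⟨m₁, hm₁, hb₁⟩ := coercive_aux hconv hC2.continuous hmin
  -- existence of points with grad x = (1-t) • g for t ∈ [0,1]
  have exist_pt : ∀ t ∈ Set.Icc (0:ℝ) 1, ∃ x, grad x = (1 - t) • g := by
    intro t ht
    obtain ⟨ht0, ht1⟩ := ht
    set Lt : EuclideanSpace ℝ (Fin d) → ℝ := fun x => L x - (1 - t) * ⟪g, x⟫_ℝ with hLt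
    have hLtid : ∀ x, Lt x = (1 - t) * L₀ x + t * L x := by
      intro x; simp only [hLt, hL₀]; ring
    set m : ℝ := min m₀ m₁ with hm
    have hmpos : 0 < m := lt_min hm₀ hm₁
    set M : ℝ := max ‖θ‖ ‖θstar‖ with hM
    set c : ℝ := min (L₀ θ - m₀) (L θstar - m₁) - m * M with hc
    have hbound : ∀ x, c + m * ‖x‖ ≤ Lt x := by
      intro x
      have k₀ := hb₀ x
      have k₁ := hb₁ x
      have n₀ : ‖x‖ - ‖θ‖ ≤ ‖x - θ‖ := norm_sub_norm_le x θ
      have n₁ : ‖x‖ - ‖θstar‖ ≤ ‖x - θstar‖ := norm_sub_norm_le x θstar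
      have hM₀ : ‖θ‖ ≤ M := le_max_left _ _
      have hM₁ : ‖θstar‖ ≤ M := le_max_right _ _
      have hmm₀ : m ≤ m₀ := min_le_left _ _
      have hmm₁ : m ≤ m₁ := min_le_right _ _
      have e₀ : (1 - t) * (L₀ θ - m₀ + m₀ * ‖x - θ‖) ≤ (1 - t) * L₀ x :=
        mul_le_mul_of_nonneg_left k₀ (by linarith)
      have e₁ : t * (L θstar - m₁ + m₁ * ‖x - θstar‖) ≤ t * L x :=
        mul_le_mul_of_nonneg_left k₁ ht0
      have f₀ : m * (‖x‖ - M) ≤ m₀ * ‖x - θ‖ := by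
        rcases le_or_gt (‖x‖ - M) 0 with h | h
        · have h1 : m * (‖x‖ - M) ≤ 0 := mul_nonpos_of_nonneg_of_nonpos hmpos.le h
          have h2 : (0:ℝ) ≤ m₀ * ‖x - θ‖ := by positivity
          linarith
        · calc m * (‖x‖ - M) ≤ m₀ * (‖x‖ - M) := mul_le_mul_of_nonneg_right hmm₀ h.le
            _ ≤ m₀ * ‖x - θ‖ := mul_le_mul_of_nonneg_left (by linarith) hm₀.le
      have f₁ : m * (‖x‖ - M) ≤ m₁ * ‖x - θstar‖ := by
        rcases le_or_gt (‖x‖ - M) 0 with h | h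
        · have h1 : m * (‖x‖ - M) ≤ 0 := mul_nonpos_of_nonneg_of_nonpos hmpos.le h
          have h2 : (0:ℝ) ≤ m₁ * ‖x - θstar‖ := by positivity
          linarith
        · calc m * (‖x‖ - M) ≤ m₁ * (‖x‖ - M) := mul_le_mul_of_nonneg_right hmm₁ h.le
            _ ≤ m₁ * ‖x - θstar‖ := mul_le_mul_of_nonneg_left (by linarith) hm₁.le
      have cmin₀ : min (L₀ θ - m₀) (L θstar - m₁) ≤ L₀ θ - m₀ := min_le_left _ _
      have cmin₁ : min (L₀ θ - m₀) (L θstar - m₁) ≤ L θstar - m₁ := min_le_right _ _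
      have key : (1 - t) * (min (L₀ θ - m₀) (L θstar - m₁) + m * (‖x‖ - M))
          + t * (min (L₀ θ - m₀) (L θstar - m₁) + m * (‖x‖ - M)) ≤ Lt x := by
        rw [hLtid]
        have g₀ : (1 - t) * (min (L₀ θ - m₀) (L θstar - m₁) + m * (‖x‖ - M))
            ≤ (1 - t) * L₀ x := by
          refine le_trans (mul_le_mul_of_nonneg_left ?_ (by linarith)) e₀
          linarith [f₀]
        have g₁ : t * (min (L₀ θ - m₀) (L θstar - m₁) + m * (‖x‖ - M)) ≤ t * L x := by
          refine le_trans (mul_le_mul_of_nonneg_left ?_ ht0) e₁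
          linarith [f₁]
        linarith
      have : c + m * ‖x‖ = (1 - t) * (min (L₀ θ - m₀) (L θstar - m₁) + m * (‖x‖ - M))
          + t * (min (L₀ θ - m₀) (L θstar - m₁) + m * (‖x‖ - M)) := by
        simp only [hc]; ring
      linarith [key, this.le]
    have hLtcont : Continuous Lt := by
      apply hC2.continuous.sub
      exact continuous_const.mul (continuous_const.inner continuous_id)
    obtain ⟨x, hxmin⟩ := exists_min_aux hLtcont hmpos hbound
    have hgradLt : HasGradientAt Lt (grad x - (1 - t) • g) x := by
      have h2 : HasGradientAt (fun y : EuclideanSpace ℝ (Fin d) => (1 - t) * ⟪g, y⟫_ℝ)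
          ((1 - t) • g) x := by
        have heq : (fun y : EuclideanSpace ℝ (Fin d) => (1 - t) * ⟪g, y⟫_ℝ)
            = fun y => ⟪(1 - t) • g, y⟫_ℝ := by
          funext y; rw [real_inner_smul_left]
        rw [heq]; exact hinner _ x
      exact hasGradientAt_sub_aux (hgrad x) h2
    have := hgradzero Lt _ x hgradLt hxmin
    exact ⟨x, sub_eq_zero.mp this⟩
  -- grad is C¹
  have hgradeq : grad = fun x =>
      (InnerProductSpace.toDual ℝ (EuclideanSpace ℝ (Fin d))).symm (fderiv ℝ L x) := by
    funext x
    rw [(hgrad x).hasFDerivAt.fderiv, LinearIsometryEquiv.symm_apply_apply]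
  have hC1fderiv : ContDiff ℝ 1 (fderiv ℝ L) := hC2.fderiv_right (by norm_num)
  have hgradC1 : ContDiff ℝ 1 grad := by
    rw [hgradeq]
    exact ((InnerProductSpace.toDual ℝ
      (EuclideanSpace ℝ (Fin d))).symm.toContinuousLinearEquiv.contDiff).comp hC1fderiv
  have hstrict : ∀ x, HasStrictFDerivAt grad
      ((posDefCLE (hess x) (hpd x) : EuclideanSpace ℝ (Fin d) ≃L[ℝ] EuclideanSpace ℝ (Fin d))
        : EuclideanSpace ℝ (Fin d) →L[ℝ] EuclideanSpace ℝ (Fin d)) x := by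
    intro x
    rw [posDefCLE_coe]
    exact (hgradC1.contDiffAt).hasStrictFDerivAt' (hhess x) one_ne_zero
  -- range of grad is open
  have Ropen : IsOpen (Set.range grad) := by
    rw [isOpen_iff_eventually]
    rintro v ⟨x, rfl⟩
    filter_upwards [(hstrict x).eventually_right_inverse] with y hy
    exact ⟨_, hy⟩
  set U : Set ℝ := {s : ℝ | (1 - s) • g ∈ Set.range grad} with hU
  have Uopen : IsOpen U :=
    Ropen.preimage (by continuity)
  -- define γ
  set γ : ℝ → EuclideanSpace ℝ (Fin d) := fun s =>
    if h : ∃ x, grad x = (1 - s) • g then h.choose else θstar with hγdef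
  have hγspec : ∀ s, (∃ x, grad x = (1 - s) • g) → grad (γ s) = (1 - s) • g := by
    intro s h
    simp only [hγdef, dif_pos h]
    exact h.choose_spec
  have hγIcc : ∀ t ∈ Set.Icc (0:ℝ) 1, grad (γ t) = (1 - t) • g := fun t ht =>
    hγspec t (exist_pt t ht)
  refine ⟨γ, ?_, ?_, hγIcc, ?_⟩
  · -- γ 0 = θ
    apply inj
    rw [hγIcc 0 (by norm_num)]
    simp [hg]
  · -- derivative
    intro t ht
    set x := γ t with hx
    have hγx : grad x = (1 - t) • g := hγIcc t ht
    set φ := (hstrict x).localInverse grad _ x with hφ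
    have htU : t ∈ U := ⟨x, hγx⟩
    have hcont : Filter.Tendsto (fun s : ℝ => (1 - s) • g) (nhds t) (nhds (grad x)) := by
      rw [hγx]
      exact ((continuous_const.sub continuous_id).smul continuous_const).tendsto t
    have hev1 : ∀ᶠ s in nhds t, grad (φ ((1 - s) • g)) = (1 - s) • g := by
      have hri := (hstrict x).eventually_right_inverse
      exact hcont.eventually hri
    have hev2 : ∀ᶠ s in nhds t, s ∈ U := Uopen.eventually_mem htU
    have hev : γ =ᶠ[nhds t] fun s => φ ((1 - s) • g) := by
      filter_upwards [hev1, hev2] with s h1 h2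
      apply inj
      rw [hγspec s h2, h1]
    have hsderiv : HasDerivAt (fun s : ℝ => (1 - s) • g) ((-1 : ℝ) • g) t :=
      ((hasDerivAt_id t).const_sub 1).smul_const g
    have hφstrict : HasStrictFDerivAt φ
        (((posDefCLE (hess x) (hpd x)).symm :
          EuclideanSpace ℝ (Fin d) ≃L[ℝ] EuclideanSpace ℝ (Fin d))
          : EuclideanSpace ℝ (Fin d) →L[ℝ] EuclideanSpace ℝ (Fin d)) (grad x) :=
      (hstrict x).to_localInverse
    have hφf : HasFDerivAt φ
        (((posDefCLE (hess x) (hpd x)).symm :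
          EuclideanSpace ℝ (Fin d) ≃L[ℝ] EuclideanSpace ℝ (Fin d))
          : EuclideanSpace ℝ (Fin d) →L[ℝ] EuclideanSpace ℝ (Fin d))
        ((fun s : ℝ => (1 - s) • g) t) := by
      have := hφstrict.hasFDerivAt
      rw [hγx] at this
      simpa using this
    have hcomp := hφf.comp_hasDerivAt t hsderiv
    have hval : ((posDefCLE (hess x) (hpd x)).symm :
          EuclideanSpace ℝ (Fin d) →L[ℝ] EuclideanSpace ℝ (Fin d)) ((-1 : ℝ) • g)
        = -(Matrix.toEuclideanLin (hess x)⁻¹ g) := by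
      rw [_root_.map_smul]
      rw [ContinuousLinearEquiv.coe_coe]
      rw [posDefCLE_symm_apply]
      simp
    rw [hval] at hcomp
    exact hcomp.congr_of_eventuallyEq hev
  · -- γ 1 = θstar
    apply inj
    rw [hγIcc 1 (by norm_num), hgradstar]
    norm_num
end
end

section
/- Under the assumptions of strict convexity, minimizer θ*, μ = λ_min(∇²L(θ*)), and multiplicative Hessian continuity at scale R: for any θ satisfying either L(θ) - min L ≤ μR²/16 or ‖∇L(θ)‖₂ ≤ Rμ/4, it holds that L(θ) - min L ≤ ∇L(θ)ᵀ(∇²L(θ))⁻¹∇L(θ) ≤ 4(L(θ) - min L). -/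
open scoped InnerProductSpace
open Matrix
noncomputable section

namespace SophiaAux

open Set

/-! ### One-dimensional calculus helpers -/

/-- If `c ≤ f'` on `[a,b]` then `f a + c*(b-a) ≤ f b`. -/
lemma T0 {f f' : ℝ → ℝ} {a b c : ℝ} (hab : a ≤ b)
    (hd : ∀ t ∈ Icc a b, HasDerivAt f (f' t) t)
    (hc : ∀ t ∈ Icc a b, c ≤ f' t) :
    f a + c * (b - a) ≤ f b := by
  set g : ℝ → ℝ := fun t => f t - c * t with hg
  have hgd : ∀ t ∈ Icc a b, HasDerivAt g (f' t - c) t := by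
    intro t ht
    have h1 : HasDerivAt (fun t : ℝ => c * t) c t := by
      simpa using (hasDerivAt_id t).const_mul c
    exact (hd t ht).sub h1
  have hmono : MonotoneOn g (Icc a b) := by
    apply monotoneOn_of_deriv_nonneg (convex_Icc a b)
    · exact fun t ht => ((hgd t ht).continuousAt).continuousWithinAt
    · intro t ht
      rw [interior_Icc] at ht
      exact ((hgd t (Ioo_subset_Icc_self ht)).differentiableAt).differentiableWithinAt
    · intro t ht
      rw [interior_Icc] at ht
      rw [(hgd t (Ioo_subset_Icc_self ht)).deriv]
      have := hc t (Ioo_subset_Icc_self ht)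
      linarith
  have := hmono (left_mem_Icc.2 hab) (right_mem_Icc.2 hab) hab
  simp only [hg] at this
  linarith

/-- If `c ≤ f''` on `[0,b]` (b ≥ 0) then `f 0 + f' 0 * b + c*b^2/2 ≤ f b`. -/
lemma T1 {f f' f'' : ℝ → ℝ} {b c : ℝ} (hb : 0 ≤ b)
    (hd : ∀ t ∈ Icc 0 b, HasDerivAt f (f' t) t)
    (hd2 : ∀ t ∈ Icc 0 b, HasDerivAt f' (f'' t) t)
    (hc : ∀ t ∈ Icc 0 b, c ≤ f'' t) :
    f 0 + f' 0 * b + c * b^2 / 2 ≤ f b := by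
  set g : ℝ → ℝ := fun t => f t - f' 0 * t - c * t^2 / 2 with hg
  have hgd : ∀ t ∈ Icc 0 b, HasDerivAt g (f' t - f' 0 - c * t) t := by
    intro t ht
    have h1 : HasDerivAt (fun t : ℝ => f' 0 * t) (f' 0) t := by
      simpa using (hasDerivAt_id t).const_mul (f' 0)
    have h2 : HasDerivAt (fun t : ℝ => c * t ^ 2 / 2) (c * t) t := by
      have h3 := ((hasDerivAt_pow 2 t).const_mul c).div_const 2
      simpa using h3.congr_deriv (by ring)
    exact ((hd t ht).sub h1).sub h2
  have key : ∀ t ∈ Icc 0 b, (0:ℝ) ≤ f' t - f' 0 - c * t := by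
    intro t ht
    have := T0 (f := f') (f' := f'') (a := 0) (b := t) (c := c) ht.1
      (fun s hs => hd2 s ⟨hs.1, hs.2.trans ht.2⟩)
      (fun s hs => hc s ⟨hs.1, hs.2.trans ht.2⟩)
    linarith
  have := T0 (f := g) (f' := fun t => f' t - f' 0 - c * t) (a := 0) (b := b) (c := 0) hb hgd
    (fun t ht => key t ht)
  simp only [hg] at this
  nlinarith [this]

/-- If `f'' ≤ c` on `[0,b]` (b ≥ 0) then `f b ≤ f 0 + f' 0 * b + c*b^2/2`. -/
lemma T2 {f f' f'' : ℝ → ℝ} {b c : ℝ} (hb : 0 ≤ b)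
    (hd : ∀ t ∈ Icc 0 b, HasDerivAt f (f' t) t)
    (hd2 : ∀ t ∈ Icc 0 b, HasDerivAt f' (f'' t) t)
    (hc : ∀ t ∈ Icc 0 b, f'' t ≤ c) :
    f b ≤ f 0 + f' 0 * b + c * b^2 / 2 := by
  have := T1 (f := fun t => -f t) (f' := fun t => -f' t) (f'' := fun t => -f'' t)
    (b := b) (c := -c) hb
    (fun t ht => (hd t ht).neg) (fun t ht => (hd2 t ht).neg)
    (fun t ht => by simpa using neg_le_neg (hc t ht))
  simp only [neg_mul] at this
  nlinarith [this]

/-! ### Linear algebra helpers -/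

variable {d : ℕ}

local notation "E" => EuclideanSpace ℝ (Fin d)

lemma symm_inner {M : Matrix (Fin d) (Fin d) ℝ} (hM : M.IsHermitian) (x y : E) :
    inner (𝕜 := ℝ) (toEuclideanLin M x) y = inner (𝕜 := ℝ) x (toEuclideanLin M y) :=
  (Matrix.isHermitian_iff_isSymmetric.1 hM) x y

lemma toEL_mul (A B : Matrix (Fin d) (Fin d) ℝ) (x : E) :
    toEuclideanLin (A * B) x = toEuclideanLin A (toEuclideanLin B x) := by
  simp [Matrix.toEuclideanLin_apply, mulVec_mulVec]

lemma toEL_eig {M : Matrix (Fin d) (Fin d) ℝ} (hM : M.IsHermitian) (i : Fin d) :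
    toEuclideanLin M (hM.eigenvectorBasis i) = hM.eigenvalues i • hM.eigenvectorBasis i := by
  have := hM.mulVec_eigenvectorBasis i
  apply (WithLp.equiv 2 (Fin d → ℝ)).injective
  simpa [Matrix.toEuclideanLin_apply] using this

lemma quadform_expand {M : Matrix (Fin d) (Fin d) ℝ} (hM : M.IsHermitian) (u : E) :
    inner (𝕜 := ℝ) u (toEuclideanLin M u)
      = ∑ i, hM.eigenvalues i * (inner (𝕜 := ℝ) u (hM.eigenvectorBasis i))^2 := by
  set b := hM.eigenvectorBasis
  rw [← b.sum_inner_mul_inner u (toEuclideanLin M u)]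
  congr 1; ext i
  rw [← symm_inner hM, toEL_eig hM i, inner_smul_left]
  simp only [conj_trivial]
  rw [real_inner_comm (b i) u]; ring

lemma norm_sq_expand (b : OrthonormalBasis (Fin d) ℝ E) (u : E) :
    ‖u‖^2 = ∑ i, (inner (𝕜 := ℝ) u (b i))^2 := by
  rw [← real_inner_self_eq_norm_sq, ← b.sum_inner_mul_inner u u]
  congr 1; ext i; rw [real_inner_comm (b i) u]; ring

lemma quadform_le_of_eig_le {M : Matrix (Fin d) (Fin d) ℝ} (hM : M.IsHermitian) {c : ℝ}
    (h : ∀ i, hM.eigenvalues i ≤ c) (u : E) :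
    inner (𝕜 := ℝ) u (toEuclideanLin M u) ≤ c * ‖u‖^2 := by
  rw [quadform_expand hM, norm_sq_expand hM.eigenvectorBasis, Finset.mul_sum]
  exact Finset.sum_le_sum fun i _ => mul_le_mul_of_nonneg_right (h i) (sq_nonneg _)

lemma quadform_ge_of_eig_ge {M : Matrix (Fin d) (Fin d) ℝ} (hM : M.IsHermitian) {c : ℝ}
    (h : ∀ i, c ≤ hM.eigenvalues i) (u : E) :
    c * ‖u‖^2 ≤ inner (𝕜 := ℝ) u (toEuclideanLin M u) := by
  rw [quadform_expand hM, norm_sq_expand hM.eigenvectorBasis, Finset.mul_sum]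
  exact Finset.sum_le_sum fun i _ => mul_le_mul_of_nonneg_right (h i) (sq_nonneg _)

lemma inner_toEL (M : Matrix (Fin d) (Fin d) ℝ) (x y : E) :
    inner (𝕜 := ℝ) x (toEuclideanLin M y)
      = star ((WithLp.equiv 2 (Fin d → ℝ)) x) ⬝ᵥ (M *ᵥ ((WithLp.equiv 2 (Fin d → ℝ)) y)) := by
  rw [EuclideanSpace.inner_eq_star_dotProduct, dotProduct_comm]
  rfl

lemma quad_pos {M : Matrix (Fin d) (Fin d) ℝ} (hM : M.PosDef) {x : E} (hx : x ≠ 0) :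
    0 < inner (𝕜 := ℝ) x (toEuclideanLin M x) := by
  rw [inner_toEL]
  apply hM.dotProduct_mulVec_pos
  intro h0
  apply hx
  apply (WithLp.equiv 2 (Fin d → ℝ)).injective
  simpa using h0

lemma quad_nonneg {M : Matrix (Fin d) (Fin d) ℝ} (hM : M.PosSemidef) (x : E) :
    0 ≤ inner (𝕜 := ℝ) x (toEuclideanLin M x) := by
  rw [inner_toEL]
  exact hM.dotProduct_mulVec_nonneg _

open scoped MatrixOrder in
/-- Key comparability lemma: if `‖toEuclideanLin (C⁻¹ * B)‖ ≤ 2` with `B, C` positive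
definite, then the quadratic form of `B` is at most twice that of `C`. -/
lemma hessComp {B C : Matrix (Fin d) (Fin d) ℝ} (hB : B.PosDef) (hC : C.PosDef)
    (h : ‖(Matrix.toEuclideanLin (C⁻¹ * B)).toContinuousLinearMap‖ ≤ 2) :
    ∀ v : E, inner (𝕜 := ℝ) v (toEuclideanLin B v)
      ≤ 2 * inner (𝕜 := ℝ) v (toEuclideanLin C v) := by
  intro v
  set S := CFC.sqrt C with hSdef
  have hSps : S.PosSemidef := (CFC.sqrt_nonneg C).posSemidef
  have hSS : S * S = C := CFC.sqrt_mul_sqrt_self C hC.posSemidef.nonneg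
  have hdetS : IsUnit S.det := by
    have h1 : S.det * S.det = C.det := by rw [← det_mul, hSS]
    have hCd := hC.det_pos
    have : S.det ≠ 0 := by
      intro h0; rw [h0, mul_zero] at h1; exact hCd.ne (by linarith)
    exact this.isUnit
  have hSinv : S⁻¹ * S = 1 := nonsing_inv_mul S hdetS
  have hSinv' : S * S⁻¹ = 1 := mul_nonsing_inv S hdetS
  have hSH : S.IsHermitian := hSps.1
  have hSiH : (S⁻¹).IsHermitian := hSH.inv
  set M := S⁻¹ * B * S⁻¹ with hMdef
  have hMH : M.IsHermitian := by
    have : Mᴴ = M := by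
      rw [hMdef, conjTranspose_mul, conjTranspose_mul, hSiH.eq, hB.1.eq, mul_assoc]
    exact this
  -- eigenvalues of M are ≤ 2
  have heig : ∀ i, hMH.eigenvalues i ≤ 2 := by
    intro i
    set e : E := hMH.eigenvectorBasis i with hedef
    set lam := hMH.eigenvalues i
    have he : toEuclideanLin M e = lam • e := toEL_eig hMH i
    have hene : e ≠ 0 := hMH.eigenvectorBasis.orthonormal.ne_zero i
    set y : E := toEuclideanLin S⁻¹ e with hydef
    have hyne : y ≠ 0 := by
      intro h0
      apply hene
      have : toEuclideanLin S (toEuclideanLin S⁻¹ e) = e := by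
        rw [← toEL_mul, hSinv']; simp [Matrix.toEuclideanLin_apply]
      rw [← this, ← hydef, h0, map_zero]
    have key : toEuclideanLin (C⁻¹ * B) y = lam • y := by
      have hCinv : C⁻¹ = S⁻¹ * S⁻¹ := by
        rw [← hSS, Matrix.mul_inv_rev]
      have hmm : C⁻¹ * B * S⁻¹ = S⁻¹ * M := by
        rw [hCinv, hMdef]; simp only [mul_assoc]
      rw [hydef, ← toEL_mul, hmm, toEL_mul, he, _root_.map_smul]
    have hnorm : ‖toEuclideanLin (C⁻¹ * B) y‖ ≤ 2 * ‖y‖ := by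
      have h1 : ‖(toEuclideanLin (C⁻¹ * B)).toContinuousLinearMap y‖ ≤
          ‖(toEuclideanLin (C⁻¹ * B)).toContinuousLinearMap‖ * ‖y‖ :=
        (toEuclideanLin (C⁻¹ * B)).toContinuousLinearMap.le_opNorm y
      calc ‖toEuclideanLin (C⁻¹ * B) y‖
          = ‖(toEuclideanLin (C⁻¹ * B)).toContinuousLinearMap y‖ := rfl
        _ ≤ _ := h1
        _ ≤ 2 * ‖y‖ := by
            apply mul_le_mul_of_nonneg_right h (norm_nonneg _)
    rw [key, norm_smul] at hnorm
    have hy0 : 0 < ‖y‖ := norm_pos_iff.2 hyne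
    have : |lam| ≤ 2 := by
      rw [Real.norm_eq_abs] at hnorm
      exact le_of_mul_le_mul_right (by linarith) hy0
    exact le_trans (le_abs_self _) this
  -- quadratic form bound
  set u : E := toEuclideanLin S v with hudef
  have hBSMS : B = S * M * S := by
    rw [hMdef]
    calc B = (S * S⁻¹) * B * (S⁻¹ * S) := by rw [hSinv', hSinv]; simp
    _ = S * (S⁻¹ * B * S⁻¹) * S := by simp only [mul_assoc]
  calc inner (𝕜 := ℝ) v (toEuclideanLin B v)
      = inner (𝕜 := ℝ) v (toEuclideanLin S (toEuclideanLin M u)) := by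
        rw [hBSMS, toEL_mul, toEL_mul, hudef]
    _ = inner (𝕜 := ℝ) u (toEuclideanLin M u) := by rw [← symm_inner hSH, hudef]
    _ ≤ 2 * ‖u‖^2 := quadform_le_of_eig_le hMH heig u
    _ = 2 * inner (𝕜 := ℝ) u u := by rw [real_inner_self_eq_norm_sq]
    _ = 2 * inner (𝕜 := ℝ) v (toEuclideanLin C v) := by
        rw [hudef, symm_inner hSH, ← toEL_mul, hSS]

/-! ### Derivatives along lines -/

lemma line_hasDerivAt (θ δ : E) (t : ℝ) : HasDerivAt (fun t : ℝ => θ + t • δ) δ t := by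
  have h : HasDerivAt (fun t : ℝ => t • δ) δ t := by
    simpa using (hasDerivAt_id t).smul_const δ
  simpa using h.const_add θ

lemma psi_deriv (L : E → ℝ) (grad : E → E) (hgrad : ∀ θ, HasGradientAt L (grad θ) θ)
    (θ δ : E) (t : ℝ) :
    HasDerivAt (fun t : ℝ => L (θ + t • δ))
      (inner (𝕜 := ℝ) (grad (θ + t • δ)) δ) t := by
  have h := ((hgrad (θ + t • δ)).hasFDerivAt).comp_hasDerivAt t (line_hasDerivAt θ δ t)
  simpa [Function.comp_def] using h

lemma psi_deriv2 (grad : E → E) (hess : E → Matrix (Fin d) (Fin d) ℝ)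
    (hhess : ∀ θ, HasFDerivAt grad ((Matrix.toEuclideanLin (hess θ)).toContinuousLinearMap) θ)
    (θ δ : E) (t : ℝ) :
    HasDerivAt (fun t : ℝ => inner (𝕜 := ℝ) (grad (θ + t • δ)) δ)
      (inner (𝕜 := ℝ) (toEuclideanLin (hess (θ + t • δ)) δ) δ) t := by
  have h1 : HasDerivAt (fun t : ℝ => grad (θ + t • δ))
      (toEuclideanLin (hess (θ + t • δ)) δ) t := by
    have h := (hhess (θ + t • δ)).comp_hasDerivAt t (line_hasDerivAt θ δ t)
    simpa [Function.comp_def] using h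
  have h2 := h1.inner (𝕜 := ℝ) (hasDerivAt_const t δ)
  simpa using h2

end SophiaAux

open SophiaAux Set

set_option maxHeartbeats 2000000 in
/-- Small loss or small gradient implies the Newton decrement approximates the loss gap. -/
theorem sophia_small_loss_or_gradient_imply_loss_approx
    (d : ℕ)
    (L : EuclideanSpace ℝ (Fin d) → ℝ)
    (grad : EuclideanSpace ℝ (Fin d) → EuclideanSpace ℝ (Fin d))
    (hess : EuclideanSpace ℝ (Fin d) → Matrix (Fin d) (Fin d) ℝ)
    (hC2 : ContDiff ℝ 2 L)
    (hgrad : ∀ θ, HasGradientAt L (grad θ) θ)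
    (hhess : ∀ θ, HasFDerivAt grad ((Matrix.toEuclideanLin (hess θ)).toContinuousLinearMap) θ)
    (hconv : StrictConvexOn ℝ Set.univ L)
    (hpd : ∀ θ, (hess θ).PosDef)
    (θstar : EuclideanSpace ℝ (Fin d))
    (hmin : ∀ θ, L θstar ≤ L θ)
    (μ : ℝ)
    (hμ : IsLeast {c : ℝ | ∃ v : EuclideanSpace ℝ (Fin d), ‖v‖ = 1 ∧
      Matrix.toEuclideanLin (hess θstar) v = c • v} μ)
    (R : ℝ) (hR : 0 < R)
    (hhessLip : ∀ θ θ' : EuclideanSpace ℝ (Fin d), ‖θ - θ'‖ ≤ R →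
      ‖(Matrix.toEuclideanLin ((hess θ')⁻¹ * hess θ)).toContinuousLinearMap‖ ≤ 2)
    (θ : EuclideanSpace ℝ (Fin d))
    (hsmall : L θ - L θstar ≤ μ * R ^ 2 / 16 ∨ ‖grad θ‖ ≤ R * μ / 4) :
    L θ - L θstar ≤ inner (𝕜 := ℝ) (grad θ) (Matrix.toEuclideanLin (hess θ)⁻¹ (grad θ)) ∧
    inner (𝕜 := ℝ) (grad θ) (Matrix.toEuclideanLin (hess θ)⁻¹ (grad θ)) ≤
      4 * (L θ - L θstar) := by
  classical
  set g : EuclideanSpace ℝ (Fin d) := grad θ with hgdef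
  set w : EuclideanSpace ℝ (Fin d) := Matrix.toEuclideanLin (hess θ)⁻¹ (grad θ) with hwdef
  set Δ : ℝ := inner (𝕜 := ℝ) g w with hΔdef
  clear_value Δ w g
  -- basic facts
  have hAw : Matrix.toEuclideanLin (hess θ) w = g := by
    rw [hwdef, ← toEL_mul, Matrix.mul_nonsing_inv _ ((hpd θ).det_pos.ne'.isUnit), hgdef]
    simp [Matrix.toEuclideanLin_apply]
  -- gradient at the minimizer vanishes
  have hstar0 : grad θstar = 0 := by
    have hloc : IsLocalMin L θstar := Filter.Eventually.of_forall hmin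
    have h0 := hloc.hasFDerivAt_eq_zero (hgrad θstar).hasFDerivAt
    have h1 : inner (𝕜 := ℝ) (grad θstar) (grad θstar) = 0 := by
      have := congrFun (congrArg DFunLike.coe h0) (grad θstar)
      simpa [InnerProductSpace.toDual_apply_apply] using this
    exact inner_self_eq_zero.1 h1
  -- μ is positive
  have hμpos : 0 < μ := by
    obtain ⟨v, hv1, hveq⟩ := hμ.1
    have hvne : v ≠ 0 := by intro h0; rw [h0, norm_zero] at hv1; norm_num at hv1
    have := quad_pos (hpd θstar) hvne
    rw [hveq, real_inner_smul_right, real_inner_self_eq_norm_sq, hv1] at this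
    simpa using this
  -- quadratic form comparability within radius R
  have hQcomp : ∀ ξ θc : EuclideanSpace ℝ (Fin d), ‖ξ - θc‖ ≤ R → ∀ v : EuclideanSpace ℝ (Fin d),
      inner (𝕜 := ℝ) v (Matrix.toEuclideanLin (hess ξ) v)
        ≤ 2 * inner (𝕜 := ℝ) v (Matrix.toEuclideanLin (hess θc) v) :=
    fun ξ θc h v => hessComp (hpd ξ) (hpd θc) (hhessLip ξ θc h) v
  -- lower bound from μ at θstar
  have hμlow : ∀ v : EuclideanSpace ℝ (Fin d), μ * ‖v‖^2 ≤
      inner (𝕜 := ℝ) v (Matrix.toEuclideanLin (hess θstar) v) := by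
    intro v
    apply quadform_ge_of_eig_ge (hpd θstar).1
    intro i
    apply hμ.2
    exact ⟨(hpd θstar).1.eigenvectorBasis i,
      (hpd θstar).1.eigenvectorBasis.orthonormal.1 i, toEL_eig (hpd θstar).1 i⟩
  -- derivative facts
  have hψd : ∀ (θ0 δ : EuclideanSpace ℝ (Fin d)) (t : ℝ), HasDerivAt (fun t : ℝ => L (θ0 + t • δ))
      (inner (𝕜 := ℝ) (grad (θ0 + t • δ)) δ) t := fun θ0 δ t => psi_deriv L grad hgrad θ0 δ t
  have hψd2 : ∀ (θ0 δ : EuclideanSpace ℝ (Fin d)) (t : ℝ),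
      HasDerivAt (fun t : ℝ => inner (𝕜 := ℝ) (grad (θ0 + t • δ)) δ)
      (inner (𝕜 := ℝ) (Matrix.toEuclideanLin (hess (θ0 + t • δ)) δ) δ) t :=
    fun θ0 δ t => psi_deriv2 grad hess hhess θ0 δ t
  have hψ''nonneg : ∀ (θ0 δ : EuclideanSpace ℝ (Fin d)) (t : ℝ),
      0 ≤ inner (𝕜 := ℝ) (Matrix.toEuclideanLin (hess (θ0 + t • δ)) δ) δ := by
    intro θ0 δ t
    rw [real_inner_comm]
    exact quad_nonneg (hpd _).posSemidef δ
  -- gap is nonneg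
  have hgap0 : 0 ≤ L θ - L θstar := by linarith [hmin θ]
  -- first-order bound : L θstar ≥ L θ + ⟪g, θstar - θ⟫
  have hfo : L θ + inner (𝕜 := ℝ) g (θstar - θ) ≤ L θstar := by
    have := T1 (f := fun t => L (θ + t • (θstar - θ)))
      (f' := fun t => inner (𝕜 := ℝ) (grad (θ + t • (θstar - θ))) (θstar - θ))
      (f'' := fun t => inner (𝕜 := ℝ)
        (Matrix.toEuclideanLin (hess (θ + t • (θstar - θ))) (θstar - θ)) (θstar - θ))
      (b := 1) (c := 0) zero_le_one
      (fun t _ => hψd θ (θstar - θ) t) (fun t _ => hψd2 θ (θstar - θ) t)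
      (fun t _ => hψ''nonneg θ (θstar - θ) t)
    simpa [hgdef] using this
  -- localization : ‖θ - θstar‖ ≤ R
  have hclose : ‖θ - θstar‖ ≤ R := by
    by_contra hcon
    push_neg at hcon
    set r : ℝ := ‖θ - θstar‖ with hrdef
    have hrpos : 0 < r := lt_trans hR hcon
    set δf : EuclideanSpace ℝ (Fin d) := θ - θstar with hδfdef
    set s : ℝ := R / r with hsdef
    have hs0 : 0 < s := div_pos hR hrpos
    have hs1 : s < 1 := (div_lt_one hrpos).2 hcon
    have hsr : s * r = R := div_mul_cancel₀ R hrpos.ne'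
    clear_value r s δf
    have hψ0 : L (θstar + (0:ℝ) • δf) = L θstar := by simp
    have hψ1 : L (θstar + (1:ℝ) • δf) = L θ := by
      simp [hδfdef]
    have hψ'0 : inner (𝕜 := ℝ) (grad (θstar + (0:ℝ) • δf)) δf = 0 := by
      simp [hstar0]
    -- second derivative lower bound on [0, s]
    have hlow : ∀ t ∈ Icc 0 s, μ * r^2 / 2 ≤
        inner (𝕜 := ℝ) (Matrix.toEuclideanLin (hess (θstar + t • δf)) δf) δf := by
      intro t ht
      have hd : ‖θstar - (θstar + t • δf)‖ ≤ R := by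
        have : θstar - (θstar + t • δf) = -(t • δf) := by abel
        rw [this, norm_neg, norm_smul, Real.norm_eq_abs, abs_of_nonneg ht.1]
        calc t * ‖δf‖ ≤ s * r := by
              rw [← hrdef]
              exact mul_le_mul_of_nonneg_right ht.2 (by linarith)
          _ = R := hsr
      have h1 := hQcomp θstar (θstar + t • δf) hd δf
      have h2 := hμlow δf
      rw [real_inner_comm]
      have : ‖δf‖^2 = r^2 := by rw [hrdef]
      rw [this] at h2
      linarith
    -- ψ(s) ≥ L θstar + μ R^2 / 4
    have step1 : L θstar + (μ * r^2 / 2) * s^2 / 2 ≤ L (θstar + s • δf) := by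
      have := T1 (f := fun t => L (θstar + t • δf))
        (f' := fun t => inner (𝕜 := ℝ) (grad (θstar + t • δf)) δf)
        (f'' := fun t => inner (𝕜 := ℝ)
          (Matrix.toEuclideanLin (hess (θstar + t • δf)) δf) δf)
        (b := s) (c := μ * r^2 / 2) hs0.le
        (fun t _ => hψd θstar δf t) (fun t _ => hψd2 θstar δf t) hlow
      simp only [hψ0, hψ'0] at this
      linarith
    -- ψ'(s) ≥ μ R r / 2
    have step2 : μ * r^2 / 2 * s ≤ inner (𝕜 := ℝ) (grad (θstar + s • δf)) δf := by
      have := T0 (f := fun t => inner (𝕜 := ℝ) (grad (θstar + t • δf)) δf)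
        (f' := fun t => inner (𝕜 := ℝ)
          (Matrix.toEuclideanLin (hess (θstar + t • δf)) δf) δf)
        (a := 0) (b := s) (c := μ * r^2 / 2) hs0.le
        (fun t ht => hψd2 θstar δf t) hlow
      simp only [hψ'0] at this
      linarith
    -- ψ' is ≥ that value on [s, 1]
    have step3 : ∀ t ∈ Icc s 1, μ * r^2 / 2 * s ≤
        inner (𝕜 := ℝ) (grad (θstar + t • δf)) δf := by
      intro t ht
      have := T0 (f := fun t => inner (𝕜 := ℝ) (grad (θstar + t • δf)) δf)
        (f' := fun t => inner (𝕜 := ℝ)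
          (Matrix.toEuclideanLin (hess (θstar + t • δf)) δf) δf)
        (a := s) (b := t) (c := 0) ht.1
        (fun u hu => hψd2 θstar δf u) (fun u hu => hψ''nonneg θstar δf u)
      linarith [step2]
    -- ψ(1) ≥ ψ(s) + (1 - s) μ R r / 2
    have step4 : L (θstar + s • δf) + (μ * r^2 / 2 * s) * (1 - s) ≤ L θ := by
      have := T0 (f := fun t => L (θstar + t • δf))
        (f' := fun t => inner (𝕜 := ℝ) (grad (θstar + t • δf)) δf)
        (a := s) (b := 1) (c := μ * r^2 / 2 * s) hs1.le
        (fun t ht => hψd θstar δf t) step3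
      simp only [hψ1] at this
      linarith
    have hgap_ge : μ * r^2 / 2 * s^2 / 2 + (μ * r^2 / 2 * s) * (1 - s) ≤ L θ - L θstar := by
      linarith
    have hsimp : μ * r^2 / 2 * s^2 / 2 = μ * R^2 / 4 := by
      rw [hsdef]; field_simp; ring
    have hsimp2 : μ * r^2 / 2 * s = μ * R * r / 2 := by
      rw [hsdef]; field_simp
    rw [hsimp, hsimp2] at hgap_ge
    rcases hsmall with hsl | hsg
    · -- small loss case
      have h1 : 0 ≤ μ * R * r / 2 * (1 - s) := by
        apply mul_nonneg _ (by linarith)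
        positivity
      have h2 : 0 < μ * R ^ 2 := by positivity
      linarith
    · -- small gradient case
      have hinner : L θ - L θstar ≤ inner (𝕜 := ℝ) g δf := by
        have : inner (𝕜 := ℝ) g (θstar - θ) = - inner (𝕜 := ℝ) g δf := by
          rw [hδfdef, ← inner_neg_right]; congr 1; abel
        rw [this] at hfo
        linarith
      have hCS : inner (𝕜 := ℝ) g δf ≤ ‖g‖ * r := by
        calc inner (𝕜 := ℝ) g δf ≤ ‖g‖ * ‖δf‖ := real_inner_le_norm g δf
          _ = ‖g‖ * r := by rw [hrdef]
      have hgr : μ * R^2 / 4 + μ * R * r / 2 * (1 - s) ≤ ‖g‖ * r := by linarith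
      have hsr' : μ * R * r / 2 * (1 - s) = μ * R * r / 2 - μ * R^2 / 2 := by
        rw [hsdef]; field_simp
      rw [hsr'] at hgr
      -- so ‖g‖ * r ≥ μ R r / 2 - μ R^2 / 4, and ‖g‖ ≤ R μ / 4 gives contradiction with r > R
      have h3 : ‖g‖ * r ≤ R * μ / 4 * r := mul_le_mul_of_nonneg_right hsg hrpos.le
      have h4 : 0 < μ * R * (r - R) := mul_pos (mul_pos hμpos hR) (by linarith)
      nlinarith [h3, h4, hgr]
  -- Hessian at θ dominates μ/2
  have hA_low : ∀ v : EuclideanSpace ℝ (Fin d), μ / 2 * ‖v‖^2 ≤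
      inner (𝕜 := ℝ) v (Matrix.toEuclideanLin (hess θ) v) := by
    intro v
    have hd : ‖θstar - θ‖ ≤ R := by rw [norm_sub_rev]; exact hclose
    have h1 := hQcomp θstar θ hd v
    have h2 := hμlow v
    linarith
  have hΔform : Δ = inner (𝕜 := ℝ) w (Matrix.toEuclideanLin (hess θ) w) := by
    rw [hΔdef, ← hAw, real_inner_comm]
  have hΔnonneg : 0 ≤ Δ := by
    rw [hΔform]; exact quad_nonneg (hpd θ).posSemidef w
  have hΔlow : μ / 2 * ‖w‖^2 ≤ Δ := by rw [hΔform]; exact hA_low w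
  -- Upper bound : L θ - L θstar ≤ Δ
  have hupper : L θ - L θstar ≤ Δ := by
    set δs : EuclideanSpace ℝ (Fin d) := θstar - θ with hδsdef
    clear_value δs
    have hδsnorm : ‖δs‖ ≤ R := by rw [hδsdef, norm_sub_rev]; exact hclose
    -- second derivative lower bound along the segment
    have hlow : ∀ t ∈ Icc (0:ℝ) 1, (1/2) * inner (𝕜 := ℝ) δs
        (Matrix.toEuclideanLin (hess θ) δs) ≤
        inner (𝕜 := ℝ) (Matrix.toEuclideanLin (hess (θ + t • δs)) δs) δs := by
      intro t ht
      have hd : ‖θ - (θ + t • δs)‖ ≤ R := by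
        have : θ - (θ + t • δs) = -(t • δs) := by abel
        rw [this, norm_neg, norm_smul, Real.norm_eq_abs, abs_of_nonneg ht.1]
        calc t * ‖δs‖ ≤ 1 * R := by
              apply mul_le_mul ht.2 hδsnorm (norm_nonneg _) zero_le_one
          _ = R := one_mul R
      have h1 := hQcomp θ (θ + t • δs) hd δs
      rw [real_inner_comm δs (Matrix.toEuclideanLin (hess (θ + t • δs)) δs)]
      linarith
    have hT := T1 (f := fun t => L (θ + t • δs))
      (f' := fun t => inner (𝕜 := ℝ) (grad (θ + t • δs)) δs)
      (f'' := fun t => inner (𝕜 := ℝ)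
        (Matrix.toEuclideanLin (hess (θ + t • δs)) δs) δs)
      (b := 1) (c := (1/2) * inner (𝕜 := ℝ) δs (Matrix.toEuclideanLin (hess θ) δs))
      zero_le_one (fun t _ => hψd θ δs t) (fun t _ => hψd2 θ δs t) hlow
    have hT1 : L θ + inner (𝕜 := ℝ) g δs +
        inner (𝕜 := ℝ) δs (Matrix.toEuclideanLin (hess θ) δs) / 4 ≤ L θstar := by
      have h0 : L (θ + (0:ℝ) • δs) = L θ := by simp
      have h1 : L (θ + (1:ℝ) • δs) = L θstar := by simp [hδsdef]
      have h2 : inner (𝕜 := ℝ) (grad (θ + (0:ℝ) • δs)) δs = inner (𝕜 := ℝ) g δs := by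
        simp [hgdef]
      simp only [h0, h1, h2] at hT
      linarith
    -- algebraic identity : 0 ≤ ⟪δs + 2w, A(δs + 2w)⟫ = ⟪δs, Aδs⟫ + 4⟪g,δs⟫ + 4Δ
    have hexp : inner (𝕜 := ℝ) (δs + (2:ℝ) • w)
        (Matrix.toEuclideanLin (hess θ) (δs + (2:ℝ) • w))
        = inner (𝕜 := ℝ) δs (Matrix.toEuclideanLin (hess θ) δs)
          + 4 * inner (𝕜 := ℝ) g δs + 4 * Δ := by
      have hsym := symm_inner (M := hess θ) (hpd θ).1
      rw [map_add, _root_.map_smul, inner_add_left, inner_add_right, inner_add_right,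
        inner_smul_left, inner_smul_right, inner_smul_left, inner_smul_right, hAw]
      simp only [conj_trivial]
      have e1 : inner (𝕜 := ℝ) δs g = inner (𝕜 := ℝ) g δs := real_inner_comm _ _
      have e2 : inner (𝕜 := ℝ) w (Matrix.toEuclideanLin (hess θ) δs)
          = inner (𝕜 := ℝ) g δs := by
        rw [← hAw, hsym w δs, ← hsym, hAw]
      have e3 : inner (𝕜 := ℝ) w g = Δ := by rw [hΔdef, real_inner_comm]
      rw [e1, e2, e3]
      ring
    have hpos : 0 ≤ inner (𝕜 := ℝ) (δs + (2:ℝ) • w)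
        (Matrix.toEuclideanLin (hess θ) (δs + (2:ℝ) • w)) :=
      quad_nonneg (hpd θ).posSemidef _
    rw [hexp] at hpos
    linarith
  refine ⟨hupper, ?_⟩
  -- Lower bound : Δ ≤ 4 (L θ - L θstar)
  by_cases hg0 : g = 0
  · have : w = 0 := by rw [hwdef, ← hgdef, hg0, map_zero]
    have hΔ0 : Δ = 0 := by rw [hΔdef, this, inner_zero_right]
    rw [hΔ0]
    linarith
  have hwne : w ≠ 0 := by
    intro h0
    apply hg0
    rw [← hAw, h0, map_zero]
  have hwpos : 0 < ‖w‖ := norm_pos_iff.2 hwne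
  -- ‖w‖ ≤ 2R
  have hwR : ‖w‖ ≤ 2 * R := by
    rcases hsmall with hsl | hsg
    · -- small loss case : suppose not
      by_contra hcon
      push_neg at hcon
      set s : ℝ := R / ‖w‖ with hsdef
      have hs0 : 0 < s := div_pos hR hwpos
      clear_value s
      have hs2 : s ≤ 1/2 := by
        rw [hsdef, div_le_iff₀ hwpos]
        linarith
      set δ : EuclideanSpace ℝ (Fin d) := (-s) • w with hδdef
      clear_value δ
      have hδnorm : ‖δ‖ = R := by
        rw [hδdef, norm_smul, Real.norm_eq_abs, abs_neg, abs_of_pos hs0, hsdef]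
        field_simp
      -- ψ'' ≤ 2 s^2 Δ on [0,1]
      have hup : ∀ t ∈ Icc (0:ℝ) 1,
          inner (𝕜 := ℝ) (Matrix.toEuclideanLin (hess (θ + t • δ)) δ) δ
            ≤ 2 * (s^2 * Δ) := by
        intro t ht
        have hd : ‖(θ + t • δ) - θ‖ ≤ R := by
          have : (θ + t • δ) - θ = t • δ := by abel
          rw [this, norm_smul, Real.norm_eq_abs, abs_of_nonneg ht.1, hδnorm]
          calc t * R ≤ 1 * R := by
                apply mul_le_mul_of_nonneg_right ht.2 hR.le
            _ = R := one_mul R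
        have h1 := hQcomp (θ + t • δ) θ hd δ
        have h2 : inner (𝕜 := ℝ) δ (Matrix.toEuclideanLin (hess θ) δ) = s^2 * Δ := by
          rw [hδdef, _root_.map_smul, inner_smul_left, inner_smul_right, hΔform]
          simp only [conj_trivial]
          ring
        rw [real_inner_comm]
        rw [h2] at h1
        linarith
      have hT := T2 (f := fun t => L (θ + t • δ))
        (f' := fun t => inner (𝕜 := ℝ) (grad (θ + t • δ)) δ)
        (f'' := fun t => inner (𝕜 := ℝ)
          (Matrix.toEuclideanLin (hess (θ + t • δ)) δ) δ)
        (b := 1) (c := 2 * (s^2 * Δ)) zero_le_one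
        (fun t _ => hψd θ δ t) (fun t _ => hψd2 θ δ t) hup
      have h0 : L (θ + (0:ℝ) • δ) = L θ := by simp
      have h2 : inner (𝕜 := ℝ) (grad (θ + (0:ℝ) • δ)) δ = -(s * Δ) := by
        have : (θ + (0:ℝ) • δ) = θ := by simp
        rw [this, hδdef, ← hgdef, inner_smul_right, hΔdef]
        ring
      simp only [h0, h2] at hT
      have hmin1 := hmin (θ + (1:ℝ) • δ)
      -- gap ≥ s Δ (1 - s) ≥ s Δ / 2
      have hgapge : s * Δ * (1 - s) ≤ L θ - L θstar := by nlinarith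
      have hΔw : μ / 2 * ‖w‖^2 ≤ Δ := hΔlow
      -- s Δ / 2 ≥ (R/‖w‖)(μ/4)‖w‖² = μ R ‖w‖ / 4 > μ R² / 2
      have hsΔ : μ * R * ‖w‖ / 4 ≤ s * Δ / 2 := by
        have hkey : μ * R * ‖w‖ * ‖w‖ * 2 ≤ R * Δ * 4 := by
          nlinarith [mul_le_mul_of_nonneg_left hΔw (by positivity : (0:ℝ) ≤ 4 * R)]
        have hs' : s * Δ = R * Δ / ‖w‖ := by rw [hsdef]; ring
        rw [hs', div_div, le_div_iff₀ (by positivity : (0:ℝ) < ‖w‖ * 2)]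
        nlinarith [hkey]
      have hchain : μ * R * (2*R) / 4 < μ * R * ‖w‖ / 4 := by
        have hmR : 0 < μ * R := mul_pos hμpos hR
        nlinarith
      have hgap2 : s * Δ / 2 ≤ s * Δ * (1 - s) := by
        have h6 : 0 ≤ (s * Δ) * (1/2 - s) := mul_nonneg (mul_nonneg hs0.le hΔnonneg) (by linarith)
        nlinarith [h6]
      linarith [hsΔ, hgapge, hchain, hgap2, hsl, mul_pos hμpos (mul_pos hR hR)]
    · -- small gradient case
      have hCS : Δ ≤ ‖g‖ * ‖w‖ := by
        rw [hΔdef]; exact real_inner_le_norm g w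
      have h5 : ‖g‖ * ‖w‖ ≤ R * μ / 4 * ‖w‖ := mul_le_mul_of_nonneg_right hsg (norm_nonneg w)
      nlinarith [hΔlow, hCS, h5, hwpos, hμpos, hR, mul_pos hμpos hwpos]
  -- final lower bound via δ = -(1/2) w
  set δ : EuclideanSpace ℝ (Fin d) := (-(1/2) : ℝ) • w with hδdef
  clear_value δ
  have hδnorm : ‖δ‖ ≤ R := by
    rw [hδdef, norm_smul, Real.norm_eq_abs]
    rw [show |(-(1/2):ℝ)| = 1/2 by norm_num]
    linarith
  have hup : ∀ t ∈ Icc (0:ℝ) 1,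
      inner (𝕜 := ℝ) (Matrix.toEuclideanLin (hess (θ + t • δ)) δ) δ ≤ 2 * (Δ/4) := by
    intro t ht
    have hd : ‖(θ + t • δ) - θ‖ ≤ R := by
      have h1 : (θ + t • δ) - θ = t • δ := by abel
      rw [h1, norm_smul, Real.norm_eq_abs, abs_of_nonneg ht.1]
      calc t * ‖δ‖ ≤ 1 * R := by
            apply mul_le_mul ht.2 hδnorm (norm_nonneg _) zero_le_one
        _ = R := one_mul R
    have h1 := hQcomp (θ + t • δ) θ hd δ
    have h2 : inner (𝕜 := ℝ) δ (Matrix.toEuclideanLin (hess θ) δ) = Δ/4 := by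
      rw [hδdef, _root_.map_smul, inner_smul_left, inner_smul_right, hΔform]
      simp only [conj_trivial]
      ring
    rw [real_inner_comm]
    rw [h2] at h1
    linarith
  have hT := T2 (f := fun t => L (θ + t • δ))
    (f' := fun t => inner (𝕜 := ℝ) (grad (θ + t • δ)) δ)
    (f'' := fun t => inner (𝕜 := ℝ)
      (Matrix.toEuclideanLin (hess (θ + t • δ)) δ) δ)
    (b := 1) (c := 2 * (Δ/4)) zero_le_one
    (fun t _ => hψd θ δ t) (fun t _ => hψd2 θ δ t) hup
  have h0 : L (θ + (0:ℝ) • δ) = L θ := by simp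
  have h2 : inner (𝕜 := ℝ) (grad (θ + (0:ℝ) • δ)) δ = -(Δ/2) := by
    have h3 : (θ + (0:ℝ) • δ) = θ := by simp
    rw [h3, hδdef, ← hgdef, inner_smul_right, hΔdef]
    ring
  simp only [h0, h2] at hT
  have hmin1 := hmin (θ + (1:ℝ) • δ)
  linarith
end
end

section
/- Under the assumptions of strict convexity, minimizer θ*, μ = λ_min(∇²L(θ*)), and multiplicative Hessian continuity at scale R: for any θ satisfying either L(θ) - min L ≤ μR²/4 or ‖∇L(θ)‖₂ ≤ Rμ/2, the Polyak–Łojasiewicz inequality L(θ) - min L ≤ μ⁻¹‖∇L(θ)‖₂² holds. -/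
open scoped InnerProductSpace
open Matrix
noncomputable section
set_option maxHeartbeats 1000000


lemma aux_posdef_inner {d : ℕ} {M : Matrix (Fin d) (Fin d) ℝ} (hM : M.PosDef)
    (v : EuclideanSpace ℝ (Fin d)) (hv : v ≠ 0) :
    0 < ⟪v, Matrix.toEuclideanLin M v⟫_ℝ := by
  have := hM.dotProduct_mulVec_pos (x := WithLp.equiv 2 _ v) (by simpa using hv)
  simpa [PiLp.inner_apply, Matrix.toEuclideanLin_apply, dotProduct, mul_comm] using this

lemma aux_rayleigh {d : ℕ} (A : EuclideanSpace ℝ (Fin d) →ₗ[ℝ] EuclideanSpace ℝ (Fin d))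
    (hA : A.IsSymmetric) (c : ℝ)
    (h : ∀ (lam : ℝ) (v : EuclideanSpace ℝ (Fin d)), ‖v‖ = 1 → A v = lam • v → c ≤ lam)
    (u : EuclideanSpace ℝ (Fin d)) :
    c * ‖u‖ ^ 2 ≤ ⟪u, A u⟫_ℝ := by
  have hrank : Module.finrank ℝ (EuclideanSpace ℝ (Fin d)) = d := finrank_euclideanSpace_fin
  set b := hA.eigenvectorBasis hrank with hb
  have hev : ∀ i, A (b i) = hA.eigenvalues hrank i • b i := fun i => by
    have := hA.apply_eigenvectorBasis hrank i
    exact_mod_cast this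
  have hlam : ∀ i, c ≤ hA.eigenvalues hrank i := fun i =>
    h _ (b i) (b.orthonormal.1 i) (hev i)
  have expand : ⟪u, A u⟫_ℝ = ∑ i, hA.eigenvalues hrank i * (⟪u, b i⟫_ℝ * ⟪b i, u⟫_ℝ) := by
    rw [← b.sum_inner_mul_inner u (A u)]
    · congr 1; ext i
      have : ⟪b i, A u⟫_ℝ = ⟪A (b i), u⟫_ℝ := (hA (b i) u).symm
      rw [this, hev i, real_inner_smul_left]; ring
  have normexp : ‖u‖ ^ 2 = ∑ i, ⟪u, b i⟫_ℝ * ⟪b i, u⟫_ℝ := by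
    have h2 : ⟪u, u⟫_ℝ = ∑ i, ⟪u, b i⟫_ℝ * ⟪b i, u⟫_ℝ := (b.sum_inner_mul_inner u u).symm
    rwa [real_inner_self_eq_norm_sq] at h2
  rw [expand, normexp, Finset.mul_sum]
  apply Finset.sum_le_sum
  intro i _
  have hnn : 0 ≤ ⟪u, b i⟫_ℝ * ⟪b i, u⟫_ℝ := by
    rw [real_inner_comm u (b i)]; exact mul_self_nonneg _
  exact mul_le_mul_of_nonneg_right (hlam i) hnn

lemma aux_mul_apply {d : ℕ} (M N : Matrix (Fin d) (Fin d) ℝ) (v : EuclideanSpace ℝ (Fin d)) :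
    Matrix.toEuclideanLin (M * N) v = Matrix.toEuclideanLin M (Matrix.toEuclideanLin N v) := by
  simp [Matrix.toEuclideanLin_apply, Matrix.mulVec_mulVec]

lemma aux_monoOn {f f' : ℝ → ℝ} {a b : ℝ} (hf : ∀ t, HasDerivAt f (f' t) t)
    (h : ∀ t, t ∈ Set.Ioo a b → 0 ≤ f' t) : MonotoneOn f (Set.Icc a b) := by
  apply monotoneOn_of_deriv_nonneg (convex_Icc a b)
  · exact fun t _ => (hf t).continuousAt.continuousWithinAt
  · intro t ht
    exact (hf t).differentiableAt.differentiableWithinAt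
  · intro t ht
    rw [interior_Icc] at ht
    rw [(hf t).deriv]
    exact h t ht

/-- Local Polyak–Łojasiewicz inequality. -/
theorem sophia_small_loss_or_gradient_imply_PL
    (d : ℕ)
    (L : EuclideanSpace ℝ (Fin d) → ℝ)
    (grad : EuclideanSpace ℝ (Fin d) → EuclideanSpace ℝ (Fin d))
    (hess : EuclideanSpace ℝ (Fin d) → Matrix (Fin d) (Fin d) ℝ)
    (hC2 : ContDiff ℝ 2 L)
    (hgrad : ∀ θ, HasGradientAt L (grad θ) θ)
    (hhess : ∀ θ, HasFDerivAt grad ((Matrix.toEuclideanLin (hess θ)).toContinuousLinearMap) θ)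
    (hconv : StrictConvexOn ℝ Set.univ L)
    (hpd : ∀ θ, (hess θ).PosDef)
    (θstar : EuclideanSpace ℝ (Fin d))
    (hmin : ∀ θ, L θstar ≤ L θ)
    (μ : ℝ)
    (hμ : IsLeast {c : ℝ | ∃ v : EuclideanSpace ℝ (Fin d), ‖v‖ = 1 ∧
      Matrix.toEuclideanLin (hess θstar) v = c • v} μ)
    (R : ℝ) (hR : 0 < R)
    (hhessLip : ∀ θ θ' : EuclideanSpace ℝ (Fin d), ‖θ - θ'‖ ≤ R →
      ‖(Matrix.toEuclideanLin ((hess θ')⁻¹ * hess θ)).toContinuousLinearMap‖ ≤ 2)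
    (θ : EuclideanSpace ℝ (Fin d))
    (hsmall : L θ - L θstar ≤ μ * R ^ 2 / 4 ∨ ‖grad θ‖ ≤ R * μ / 2) :
    L θ - L θstar ≤ μ⁻¹ * ‖grad θ‖ ^ 2 := by
  -- symmetry of hessians
  have hsymm : ∀ y, (Matrix.toEuclideanLin (hess y)).IsSymmetric :=
    fun y => Matrix.isHermitian_iff_isSymmetric.mp (hpd y).1
  -- μ is positive
  obtain ⟨v₀, hv₀, hveq₀⟩ := hμ.1
  have hv₀ne : v₀ ≠ 0 := fun h => by simp [h] at hv₀
  have hμpos : 0 < μ := by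
    have := aux_posdef_inner (hpd θstar) v₀ hv₀ne
    rw [hveq₀, real_inner_smul_right, real_inner_self_eq_norm_sq, hv₀] at this
    simpa using this
  -- Rayleigh at θstar
  have ray_star : ∀ u, μ * ‖u‖ ^ 2 ≤ ⟪u, Matrix.toEuclideanLin (hess θstar) u⟫_ℝ := by
    intro u
    refine aux_rayleigh _ (hsymm θstar) μ ?_ u
    intro lam v hv1 hveq
    exact hμ.2 ⟨v, hv1, hveq⟩
  -- the gradient vanishes at the minimizer
  have grad0 : grad θstar = 0 := by
    have hloc : IsLocalMin L θstar := Filter.Eventually.of_forall (fun x => hmin x)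
    have h0 := hloc.hasFDerivAt_eq_zero (hgrad θstar).hasFDerivAt
    have := congrArg (InnerProductSpace.toDual ℝ (EuclideanSpace ℝ (Fin d))).symm h0
    simpa using this
  -- Rayleigh lower bound μ/2 on the ball
  have ray_ball : ∀ y, ‖y - θstar‖ ≤ R →
      ∀ u, μ / 2 * ‖u‖ ^ 2 ≤ ⟪u, Matrix.toEuclideanLin (hess y) u⟫_ℝ := by
    intro y hy
    have hdet : IsUnit (hess y).det := isUnit_iff_ne_zero.mpr (ne_of_gt (hpd y).det_pos)
    have hfac : hess y * ((hess y)⁻¹ * hess θstar) = hess θstar := by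
      rw [← Matrix.mul_assoc, Matrix.mul_nonsing_inv _ hdet, Matrix.one_mul]
    -- norm lower bound ‖A w‖ ≥ μ/2 ‖w‖
    have hnorm : ∀ w, μ * ‖w‖ ^ 2 ≤ 2 * (‖Matrix.toEuclideanLin (hess y) w‖ * ‖w‖) := by
      intro w
      have h1 := ray_star w
      have h2 : Matrix.toEuclideanLin (hess θstar) w =
          Matrix.toEuclideanLin (hess y)
            (Matrix.toEuclideanLin ((hess y)⁻¹ * hess θstar) w) := by
        rw [← aux_mul_apply, hfac]
      set Bw := Matrix.toEuclideanLin ((hess y)⁻¹ * hess θstar) w with hBw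
      have h3 : ⟪w, Matrix.toEuclideanLin (hess θstar) w⟫_ℝ
          = ⟪Matrix.toEuclideanLin (hess y) w, Bw⟫_ℝ := by
        rw [h2]; exact (hsymm y w Bw).symm
      have hBwnorm : ‖Bw‖ ≤ 2 * ‖w‖ := by
        have hLip := hhessLip θstar y (by rwa [norm_sub_rev] at hy)
        calc ‖Bw‖ = ‖(Matrix.toEuclideanLin ((hess y)⁻¹ * hess θstar)).toContinuousLinearMap w‖ := rfl
        _ ≤ ‖(Matrix.toEuclideanLin ((hess y)⁻¹ * hess θstar)).toContinuousLinearMap‖ * ‖w‖ :=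
            ContinuousLinearMap.le_opNorm _ _
        _ ≤ 2 * ‖w‖ := mul_le_mul_of_nonneg_right hLip (norm_nonneg _)
      calc μ * ‖w‖ ^ 2 ≤ ⟪w, Matrix.toEuclideanLin (hess θstar) w⟫_ℝ := h1
      _ = ⟪Matrix.toEuclideanLin (hess y) w, Bw⟫_ℝ := h3
      _ ≤ ‖Matrix.toEuclideanLin (hess y) w‖ * ‖Bw‖ := real_inner_le_norm _ _
      _ ≤ ‖Matrix.toEuclideanLin (hess y) w‖ * (2 * ‖w‖) :=
          mul_le_mul_of_nonneg_left hBwnorm (norm_nonneg _)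
      _ = 2 * (‖Matrix.toEuclideanLin (hess y) w‖ * ‖w‖) := by ring
    refine aux_rayleigh _ (hsymm y) (μ/2) ?_
    intro lam v hv1 hveq
    have hvne : v ≠ 0 := fun h => by simp [h] at hv1
    have hlampos : 0 < lam := by
      have := aux_posdef_inner (hpd y) v hvne
      rw [hveq, real_inner_smul_right, real_inner_self_eq_norm_sq, hv1] at this
      simpa using this
    have := hnorm v
    rw [hveq, hv1] at this
    have hnv : ‖lam • v‖ = lam := by
      rw [norm_smul, hv1, Real.norm_eq_abs, abs_of_pos hlampos, mul_one]
    rw [hnv] at this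
    simpa using by linarith
  have ray_pos : ∀ y u, u ≠ 0 → 0 < ⟪u, Matrix.toEuclideanLin (hess y) u⟫_ℝ :=
    fun y u h => aux_posdef_inner (hpd y) u h
  set u := θ - θstar with hu_def
  by_cases hu : u = 0
  · have : θ = θstar := by
      rw [← sub_eq_zero]; exact hu
    rw [this]
    simp only [sub_self]
    positivity
  set T := ‖u‖ with hT_def
  have hT : 0 < T := norm_pos_iff.mpr hu
  set γ : ℝ → EuclideanSpace ℝ (Fin d) := fun t => θstar + t • u with hγ_def
  have hγ1 : γ 1 = θ := by simp [hγ_def, hu_def]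
  have hγ0 : γ 0 = θstar := by simp [hγ_def]
  have hγdist : ∀ t : ℝ, 0 ≤ t → ‖γ t - θstar‖ = t * T := by
    intro t ht
    simp [hγ_def, norm_smul, abs_of_nonneg ht, hT_def]
  have hγ : ∀ t : ℝ, HasDerivAt γ u t := by
    intro t
    have h1 : HasDerivAt (fun t : ℝ => t • u) ((1:ℝ) • u) t := (hasDerivAt_id t).smul_const u
    have h2 := h1.const_add θstar
    rw [one_smul] at h2
    exact h2
  set p : ℝ → ℝ := fun t => ⟪u, grad (γ t)⟫_ℝ with hp_def
  set q : ℝ → ℝ := fun t => ⟪u, Matrix.toEuclideanLin (hess (γ t)) u⟫_ℝ with hq_def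
  have hφ : ∀ t, HasDerivAt (fun s => L (γ s)) (p t) t := by
    intro t
    have h1 := ((hgrad (γ t)).hasFDerivAt).comp_hasDerivAt t (hγ t)
    have h2 : (InnerProductSpace.toDual ℝ (EuclideanSpace ℝ (Fin d)) (grad (γ t))) u = p t := by
      rw [InnerProductSpace.toDual_apply_apply]
      exact real_inner_comm _ _
    rw [h2] at h1
    exact h1
  have hp : ∀ t, HasDerivAt p (q t) t := by
    intro t
    have h1 := (hhess (γ t)).comp_hasDerivAt t (hγ t)
    have h2 := ((innerSL ℝ u).hasFDerivAt).comp_hasDerivAt t h1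
    simpa [hp_def, hq_def, Function.comp_def] using h2
  have p0 : p 0 = 0 := by simp [hp_def, hγ0, grad0]
  have q_pos : ∀ t, 0 < q t := fun t => ray_pos (γ t) u hu
  have pmono : StrictMono p := strictMono_of_deriv_pos (fun t => by
    rw [(hp t).deriv]; exact q_pos t)
  set s0 : ℝ := min 1 (R / T) with hs0_def
  have hs0pos : 0 < s0 := lt_min one_pos (div_pos hR hT)
  have hs0le1 : s0 ≤ 1 := min_le_left _ _
  have hs0T : s0 * T ≤ R := by
    have : s0 ≤ R / T := min_le_right _ _
    calc s0 * T ≤ (R / T) * T := mul_le_mul_of_nonneg_right this hT.le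
    _ = R := div_mul_cancel₀ R (ne_of_gt hT)
  have q_ball : ∀ t, 0 ≤ t → t ≤ s0 → μ / 2 * T ^ 2 ≤ q t := by
    intro t ht0 hts
    have hdist : ‖γ t - θstar‖ ≤ R := by
      rw [hγdist t ht0]
      calc t * T ≤ s0 * T := mul_le_mul_of_nonneg_right hts hT.le
      _ ≤ R := hs0T
    exact ray_ball (γ t) hdist u
  -- monotonicity of k t = p t - μ/2 T² t on [0, s0]
  have kmono : MonotoneOn (fun t => p t - μ / 2 * T ^ 2 * t) (Set.Icc 0 s0) := by
    apply aux_monoOn (f' := fun t => q t - μ / 2 * T ^ 2)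
    · intro t
      have hc : HasDerivAt (fun t : ℝ => μ / 2 * T ^ 2 * t) (μ / 2 * T ^ 2) t := by
        simpa using (hasDerivAt_id t).const_mul (μ / 2 * T ^ 2)
      exact (hp t).sub hc
    · intro t ht
      have := q_ball t ht.1.le ht.2.le
      linarith
  have pbound : ∀ t, 0 ≤ t → t ≤ s0 → μ / 2 * T ^ 2 * t ≤ p t := by
    intro t ht0 hts
    have := kmono (Set.mem_Icc.mpr ⟨le_refl 0, hs0pos.le⟩) (Set.mem_Icc.mpr ⟨ht0, hts⟩) ht0
    simp only [p0] at this
    linarith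
  have p1T : p 1 ≤ T * ‖grad θ‖ := by
    rw [hp_def]
    simp only [hγ1]
    exact real_inner_le_norm u (grad θ)
  -- Step 1 : T ≤ R
  have hTR : T ≤ R := by
    by_contra hTR
    push_neg at hTR
    have hs0eq : s0 = R / T := min_eq_right (le_of_lt ((div_lt_one hT).mpr hTR))
    have hs0lt1 : s0 < 1 := by
      rw [hs0eq]
      exact (div_lt_one hT).mpr hTR
    have hs0Teq : s0 * T = R := by
      rw [hs0eq]; exact div_mul_cancel₀ R (ne_of_gt hT)
    have hps0 : μ / 2 * T * R ≤ p s0 := by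
      have := pbound s0 hs0pos.le (le_refl _)
      calc μ / 2 * T * R = μ / 2 * T ^ 2 * s0 := by rw [← hs0Teq]; ring
      _ ≤ p s0 := this
    have hp1 : p s0 < p 1 := pmono hs0lt1
    rcases hsmall with hloss | hgrad2
    · -- small loss case
      have mmono : MonotoneOn (fun t => L (γ t) - μ / 4 * T ^ 2 * t ^ 2) (Set.Icc 0 s0) := by
        apply aux_monoOn (f' := fun t => p t - μ / 2 * T ^ 2 * t)
        · intro t
          have hc : HasDerivAt (fun t : ℝ => μ / 4 * T ^ 2 * t ^ 2) (μ / 2 * T ^ 2 * t) t := by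
            have := ((hasDerivAt_pow 2 t).const_mul (μ / 4 * T ^ 2))
            exact this.congr_deriv (by ring)
          exact (hφ t).sub hc
        · intro t ht
          have := pbound t ht.1.le ht.2.le
          linarith
      have h1 := mmono (Set.mem_Icc.mpr ⟨le_refl 0, hs0pos.le⟩)
        (Set.mem_Icc.mpr ⟨hs0pos.le, le_refl _⟩) hs0pos.le
      simp only [hγ0] at h1
      -- L (γ s0) ≥ L θstar + μ/4 T² s0²
      have hs0sq : μ / 4 * T ^ 2 * s0 ^ 2 = μ * R ^ 2 / 4 := by
        rw [← hs0Teq]; ring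
      have nmono : MonotoneOn (fun t => L (γ t) - p s0 * t) (Set.Icc s0 1) := by
        apply aux_monoOn (f' := fun t => p t - p s0)
        · intro t
          have hc : HasDerivAt (fun t : ℝ => p s0 * t) (p s0) t := by
            simpa using (hasDerivAt_id t).const_mul (p s0)
          exact (hφ t).sub hc
        · intro t ht
          have := (pmono.monotone ht.1.le)
          linarith
      have h2 := nmono (Set.mem_Icc.mpr ⟨le_refl _, hs0lt1.le⟩)
        (Set.mem_Icc.mpr ⟨hs0lt1.le, le_refl 1⟩) hs0lt1.le
      simp only [hγ1, mul_one] at h2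
      -- combining
      have hps0pos : 0 < p s0 := by
        have : 0 < μ / 2 * T * R := by positivity
        linarith
      nlinarith [mul_pos hps0pos (sub_pos.mpr hs0lt1)]
    · -- small gradient case
      have h1le : p 1 ≤ T * (R * μ / 2) :=
        le_trans p1T (mul_le_mul_of_nonneg_left hgrad2 hT.le)
      have heq : T * (R * μ / 2) = μ / 2 * T * R := by ring
      rw [heq] at h1le
      linarith
  -- Step 2 : the PL inequality
  have hs0eq1 : s0 = 1 := min_eq_left ((one_le_div hT).mpr hTR)
  have hmono2 : MonotoneOn
      (fun t => L (γ 1) - L (γ t) - (1 - t) * p 1 + μ / 4 * T ^ 2 * (1 - t) ^ 2)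
      (Set.Icc 0 1) := by
    apply aux_monoOn (f' := fun t => p 1 - p t - μ / 2 * T ^ 2 * (1 - t))
    · intro t
      have h1 : HasDerivAt (fun t : ℝ => L (γ 1) - L (γ t)) (-(p t)) t :=
        ((hφ t).const_sub _)
      have h2 : HasDerivAt (fun t : ℝ => (1 - t) * p 1) (-(p 1)) t := by
        have := ((hasDerivAt_id t).const_sub 1).mul_const (p 1)
        simpa using this
      have h3 : HasDerivAt (fun t : ℝ => μ / 4 * T ^ 2 * (1 - t) ^ 2)
          (-(μ / 2 * T ^ 2 * (1 - t))) t := by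
        have hb : HasDerivAt (fun t : ℝ => (1 - t) ^ 2) (2 * (1 - t) * (-1)) t := by
          have hbase : HasDerivAt (fun t : ℝ => 1 - t) (-1) t := by
            simpa using ((hasDerivAt_id t).const_sub 1)
          simpa using (hbase.fun_pow 2)
        have := hb.const_mul (μ / 4 * T ^ 2)
        exact this.congr_deriv (by ring)
      have := (h1.sub h2).add h3
      exact this.congr_deriv (by ring)
    · intro t ht
      have h1 := kmono (Set.mem_Icc.mpr ⟨ht.1.le, by rw [hs0eq1]; exact ht.2.le⟩)
        (Set.mem_Icc.mpr ⟨zero_le_one, by rw [hs0eq1]⟩) ht.2.le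
      dsimp at h1
      linarith
  have hfinal := hmono2 (Set.mem_Icc.mpr ⟨le_refl 0, zero_le_one⟩)
    (Set.mem_Icc.mpr ⟨zero_le_one, le_refl 1⟩) zero_le_one
  simp only [hγ0, hγ1, sub_self, sub_zero, zero_mul, mul_one] at hfinal
  -- hfinal : L θ - L θstar - p 1 + μ/4 T² ≤ 0
  norm_num at hfinal
  have key : L θ - L θstar ≤ T * ‖grad θ‖ - μ / 4 * T ^ 2 := by
    linarith [p1T]
  rw [inv_mul_eq_div, le_div_iff₀ hμpos]
  have hA := mul_le_mul_of_nonneg_right key hμpos.le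
  have hB := sq_nonneg (‖grad θ‖ - μ * T / 2)
  nlinarith [hA, hB]
end
end

section
/- Under the assumptions of strict convexity, minimizer θ*, μ = λ_min(∇²L(θ*)), and multiplicative Hessian continuity at scale R: for any θ with L(θ) - min L ≤ μR²/16, the Newton step is bounded: ‖(∇²L(θ))⁻¹ ∇L(θ)‖₂ ≤ sqrt(8(L(θ) - min L)/μ). -/
open scoped InnerProductSpace
open Matrix
noncomputable section
open Set

private lemma mono_aux (f f' : ℝ → ℝ) (hf : ∀ t, HasDerivAt f (f' t) t)
    (h : ∀ t ∈ Icc (0:ℝ) 1, 0 ≤ f' t) : ∀ x ∈ Icc (0:ℝ) 1, f 0 ≤ f x := by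
  have hdiff : Differentiable ℝ f := fun t => (hf t).differentiableAt
  have hmono : MonotoneOn f (Icc (0:ℝ) 1) := by
    apply monotoneOn_of_deriv_nonneg (convex_Icc 0 1) hdiff.continuous.continuousOn
      (hdiff.differentiableOn)
    intro x hx
    rw [(hf x).deriv]
    exact h x (interior_subset hx)
  intro x hx
  exact hmono (left_mem_Icc.2 zero_le_one) hx hx.1

private lemma taylor_lb_aux (f f' f'' : ℝ → ℝ) (hf : ∀ t, HasDerivAt f (f' t) t)
    (hf' : ∀ t, HasDerivAt f' (f'' t) t) (c : ℝ)
    (hc : ∀ t ∈ Icc (0:ℝ) 1, c ≤ f'' t) : f 0 + f' 0 + c / 2 ≤ f 1 := by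
  have step1 : ∀ x ∈ Icc (0:ℝ) 1, f' 0 + c * x ≤ f' x := by
    have := mono_aux (fun t => f' t - c * t) (fun t => f'' t - c)
      (fun t => by exact ((hf' t).sub ((hasDerivAt_id' t).const_mul c)).congr_deriv (by ring))
      (fun t ht => sub_nonneg.2 (hc t ht))
    intro x hx
    have := this x hx
    simp only [mul_zero, sub_zero] at this
    linarith
  have step2 := mono_aux (fun t => f t - f' 0 * t - c * t ^ 2 / 2)
    (fun t => f' t - f' 0 - c * t)
    (fun t => by
      have h1 : HasDerivAt (fun t : ℝ => f' 0 * t) (f' 0) t := by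
        simpa using (hasDerivAt_id t).const_mul (f' 0)
      have h2 : HasDerivAt (fun t : ℝ => c * t ^ 2 / 2) (c * t) t := by
        have := ((hasDerivAt_pow 2 t).const_mul c).div_const 2
        refine this.congr_deriv ?_
        norm_num
        ring
      exact ((hf t).sub h1).sub h2)
    (fun t ht => by have := step1 t ht; linarith)
  have := step2 1 (right_mem_Icc.2 zero_le_one)
  norm_num at this
  linarith

private lemma taylor_ub_aux (f f' f'' : ℝ → ℝ) (hf : ∀ t, HasDerivAt f (f' t) t)
    (hf' : ∀ t, HasDerivAt f' (f'' t) t) (C : ℝ)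
    (hC : ∀ t ∈ Icc (0:ℝ) 1, f'' t ≤ C) : f 1 ≤ f 0 + f' 0 + C / 2 := by
  have := taylor_lb_aux (fun t => -f t) (fun t => -f' t) (fun t => -f'' t)
    (fun t => (hf t).neg) (fun t => (hf' t).neg) (-C)
    (fun t ht => neg_le_neg (hC t ht))
  linarith

private def κ (M : Matrix (Fin d) (Fin d) ℝ) :
    EuclideanSpace ℝ (Fin d) →L[ℝ] EuclideanSpace ℝ (Fin d) :=
  (Matrix.toEuclideanLin M).toContinuousLinearMap

private lemma κ_apply (M : Matrix (Fin d) (Fin d) ℝ) (v : EuclideanSpace ℝ (Fin d)) :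
    κ M v = Matrix.toEuclideanLin M v := rfl

private lemma κ_mul (M N : Matrix (Fin d) (Fin d) ℝ) : κ (M * N) = κ M * κ N := by
  ext1 v
  show Matrix.toEuclideanLin (M * N) v = Matrix.toEuclideanLin M (Matrix.toEuclideanLin N v)
  simp [Matrix.toEuclideanLin_apply, ← Matrix.mulVec_mulVec]

private lemma κ_one : κ (1 : Matrix (Fin d) (Fin d) ℝ) = 1 := by
  ext1 v
  show Matrix.toEuclideanLin (1 : Matrix (Fin d) (Fin d) ℝ) v = v
  simp [Matrix.toEuclideanLin_apply]

private lemma κ_symm {M : Matrix (Fin d) (Fin d) ℝ} (hM : M.IsHermitian)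
    (x y : EuclideanSpace ℝ (Fin d)) : ⟪κ M x, y⟫_ℝ = ⟪x, κ M y⟫_ℝ := by
  have := (Matrix.isHermitian_iff_isSymmetric.1 hM) x y
  simpa [κ_apply] using this

set_option maxHeartbeats 1000000 in
set_option synthInstance.maxHeartbeats 100000 in
private lemma loewner {A B : Matrix (Fin d) (Fin d) ℝ} (hA : A.PosDef) (hB : B.PosDef)
    (h : ‖(Matrix.toEuclideanLin (A⁻¹ * B)).toContinuousLinearMap‖ ≤ 2)
    (v : EuclideanSpace ℝ (Fin d)) :
    ⟪Matrix.toEuclideanLin B v, v⟫_ℝ ≤ 2 * ⟪Matrix.toEuclideanLin A v, v⟫_ℝ := by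
  have h' : ‖κ (A⁻¹ * B)‖ ≤ 2 := h
  set S := (open scoped MatrixOrder in CFC.sqrt A) with hSdef
  have hSS : S * S = A := (open scoped MatrixOrder in CFC.sqrt_mul_sqrt_self A hA.posSemidef.nonneg)
  have hSherm : S.IsHermitian := (open scoped MatrixOrder in (CFC.sqrt_nonneg A).posSemidef.1)
  have hdetA : (0:ℝ) < A.det := hA.det_pos
  have hdetS : S.det ≠ 0 := by
    intro h0
    rw [← hSS, Matrix.det_mul, h0, mul_zero] at hdetA
    exact lt_irrefl _ hdetA
  have hS1 : S * S⁻¹ = 1 := Matrix.mul_nonsing_inv S (isUnit_iff_ne_zero.2 hdetS)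
  have hS1' : S⁻¹ * S = 1 := Matrix.nonsing_inv_mul S (isUnit_iff_ne_zero.2 hdetS)
  have hAinv : A⁻¹ = S⁻¹ * S⁻¹ := by rw [← hSS, Matrix.mul_inv_rev]
  set s : EuclideanSpace ℝ (Fin d) →L[ℝ] EuclideanSpace ℝ (Fin d) := κ S with hsdef
  set s' := κ S⁻¹ with hs'def
  set b := κ B with hbdef
  set t := κ (A⁻¹ * B) with htdef
  set M := κ (S⁻¹ * B * S⁻¹) with hMdef
  have hss' : s * s' = 1 := by rw [hsdef, hs'def, ← κ_mul, hS1, κ_one]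
  have hs's : s' * s = 1 := by rw [hsdef, hs'def, ← κ_mul, hS1', κ_one]
  have hMst : M = s * t * s' := by
    rw [hMdef, htdef, hsdef, hs'def, ← κ_mul, ← κ_mul]
    congr 1
    rw [hAinv]
    calc S⁻¹ * B * S⁻¹ = (S * S⁻¹) * (S⁻¹ * B * S⁻¹) := by rw [hS1, one_mul]
      _ = S * (S⁻¹ * S⁻¹ * B) * S⁻¹ := by simp only [Matrix.mul_assoc]
  -- powers
  have hMpow : ∀ n : ℕ, M ^ (n + 1) = s * t ^ (n + 1) * s' := by
    intro n
    induction n with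
    | zero => simpa using hMst
    | succ k ih =>
      have : M ^ (k + 2) = M ^ (k + 1) * M := by rw [← pow_succ]
      rw [this, ih, hMst]
      have e1 : s * t ^ (k + 1) * s' * (s * t * s') = s * t ^ (k + 1) * (s' * s) * (t * s') := by
        simp only [mul_assoc]
      rw [e1, hs's, mul_one]
      simp only [pow_succ, mul_assoc]
  have htn : ∀ n : ℕ, ‖t ^ (n + 1)‖ ≤ 2 ^ (n + 1) := by
    intro n
    induction n with
    | zero => simpa only [zero_add, pow_one] using h'
    | succ k ih =>
      calc ‖t ^ (k + 2)‖ = ‖t ^ (k + 1) * t‖ := by rw [← pow_succ]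
        _ ≤ ‖t ^ (k + 1)‖ * ‖t‖ := norm_mul_le _ _
        _ ≤ 2 ^ (k + 1) * 2 := by
            apply mul_le_mul ih h' (norm_nonneg _) (by positivity)
        _ = 2 ^ (k + 2) := by ring
  have hMn : ∀ n : ℕ, ‖M ^ (n + 1)‖ ≤ ‖s‖ * ‖s'‖ * 2 ^ (n + 1) := by
    intro n
    rw [hMpow n]
    calc ‖s * t ^ (n + 1) * s'‖ ≤ ‖s * t ^ (n + 1)‖ * ‖s'‖ := norm_mul_le _ _
      _ ≤ ‖s‖ * ‖t ^ (n + 1)‖ * ‖s'‖ := by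
          apply mul_le_mul_of_nonneg_right (norm_mul_le _ _) (norm_nonneg _)
      _ ≤ ‖s‖ * 2 ^ (n + 1) * ‖s'‖ := by
          apply mul_le_mul_of_nonneg_right _ (norm_nonneg _)
          exact mul_le_mul_of_nonneg_left (htn n) (norm_nonneg _)
      _ = ‖s‖ * ‖s'‖ * 2 ^ (n + 1) := by ring
  -- self-adjointness
  have hMherm : (S⁻¹ * B * S⁻¹).IsHermitian := by
    have hSinvherm : (S⁻¹).IsHermitian := hSherm.inv
    have := Matrix.isHermitian_mul_mul_conjTranspose S⁻¹ hB.isHermitian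
    rwa [hSinvherm.eq] at this
  have hMsa : IsSelfAdjoint M := by
    apply LinearMap.IsSymmetric.isSelfAdjoint
    intro x y
    exact κ_symm hMherm x y
  -- C* property: ‖M‖ ^ (2 ^ k) = ‖M ^ (2 ^ k)‖
  have hMcstar : ∀ k : ℕ, ‖M‖ ^ (2 ^ k) = ‖M ^ (2 ^ k)‖ := by
    intro k
    induction k with
    | zero => simp only [pow_zero, pow_one]
    | succ k ih =>
      have hsa : IsSelfAdjoint (M ^ (2 ^ k)) := hMsa.pow _
      have hcs : ‖(M ^ (2 ^ k)) * (M ^ (2 ^ k))‖ = ‖M ^ (2 ^ k)‖ * ‖M ^ (2 ^ k)‖ := by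
        have h1 := ContinuousLinearMap.norm_adjoint_comp_self (M ^ (2 ^ k))
        rwa [hsa.adjoint_eq, ← ContinuousLinearMap.mul_def] at h1
      have : (2:ℕ) ^ (k + 1) = 2 ^ k + 2 ^ k := by ring
      rw [this, pow_add, pow_add, hcs, ← ih]
  -- conclude ‖M‖ ≤ 2
  have hM2 : ‖M‖ ≤ 2 := by
    by_contra hcon
    push_neg at hcon
    have hr1 : (1:ℝ) < ‖M‖ / 2 := by linarith
    obtain ⟨k, hk⟩ := pow_unbounded_of_one_lt (‖s‖ * ‖s'‖) hr1
    have h2k : ∀ j : ℕ, (‖M‖ / 2) ^ j ≤ ‖s‖ * ‖s'‖ := by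
      intro j
      calc (‖M‖ / 2) ^ j ≤ (‖M‖ / 2) ^ (2 ^ j) :=
            pow_le_pow_right₀ hr1.le (Nat.lt_two_pow_self (n := j)).le
        _ = ‖M‖ ^ (2 ^ j) / 2 ^ (2 ^ j) := by rw [div_pow]
        _ ≤ ‖s‖ * ‖s'‖ := by
            rw [div_le_iff₀ (by positivity)]
            obtain ⟨m, hm⟩ : ∃ m, 2 ^ j = m + 1 :=
              ⟨2 ^ j - 1, (Nat.succ_pred_eq_of_pos (Nat.pow_pos (n := j) (by norm_num))).symm⟩
            rw [hMcstar j, hm]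
            exact hMn m
    exact absurd (h2k k) (not_le.2 hk)
  -- final computation
  have hBv : κ B v = s (M (s v)) := by
    have : S * (S⁻¹ * B * S⁻¹) * S = B := by
      calc S * (S⁻¹ * B * S⁻¹) * S = (S * S⁻¹) * B * (S⁻¹ * S) := by
            simp only [Matrix.mul_assoc]
        _ = B := by rw [hS1, hS1', one_mul, Matrix.mul_one]
    calc κ B v = κ (S * (S⁻¹ * B * S⁻¹) * S) v := by rw [this]
      _ = s (M (s v)) := by rw [κ_mul, κ_mul]; rfl
  have hAv : κ A v = s (s v) := by
    rw [← hSS, κ_mul]; rfl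
  have hsv : ⟪s v, s v⟫_ℝ = ⟪κ A v, v⟫_ℝ := by
    have h1 := κ_symm hSherm v (s v)
    rw [hAv]
    exact h1.trans (real_inner_comm _ _)
  calc ⟪Matrix.toEuclideanLin B v, v⟫_ℝ = ⟪M (s v), s v⟫_ℝ := by
        rw [show (Matrix.toEuclideanLin B v : EuclideanSpace ℝ (Fin d)) = κ B v from rfl, hBv]
        exact κ_symm hSherm (M (s v)) v
    _ ≤ ‖M (s v)‖ * ‖s v‖ := real_inner_le_norm _ _
    _ ≤ (‖M‖ * ‖s v‖) * ‖s v‖ :=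
        mul_le_mul_of_nonneg_right (M.le_opNorm _) (norm_nonneg _)
    _ ≤ (2 * ‖s v‖) * ‖s v‖ :=
        mul_le_mul_of_nonneg_right (mul_le_mul_of_nonneg_right hM2 (norm_nonneg _)) (norm_nonneg _)
    _ = 2 * ⟪s v, s v⟫_ℝ := by rw [real_inner_self_eq_norm_mul_norm]; ring
    _ = 2 * ⟪Matrix.toEuclideanLin A v, v⟫_ℝ := by rw [hsv]; rfl

private lemma quad_pos {A : Matrix (Fin d) (Fin d) ℝ} (hA : A.PosDef)
    {v : EuclideanSpace ℝ (Fin d)} (hv : v ≠ 0) :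
    0 < ⟪Matrix.toEuclideanLin A v, v⟫_ℝ := by
  have h := hA.dotProduct_mulVec_pos (x := WithLp.equiv 2 _ v) (by simpa using hv)
  rw [real_inner_comm]
  rw [EuclideanSpace.inner_eq_star_dotProduct]
  simpa [Matrix.toEuclideanLin_apply, dotProduct_comm] using h

private lemma eigen_toEuclideanLin {A : Matrix (Fin d) (Fin d) ℝ} (hA : A.IsHermitian)
    (i : Fin d) :
    Matrix.toEuclideanLin A (hA.eigenvectorBasis i) =
      hA.eigenvalues i • hA.eigenvectorBasis i := by
  have h := hA.mulVec_eigenvectorBasis i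
  apply (WithLp.equiv 2 (Fin d → ℝ)).injective
  simpa [Matrix.toEuclideanLin_apply] using h

private lemma quad_ge_mu {A : Matrix (Fin d) (Fin d) ℝ} (hA : A.IsHermitian) {μ : ℝ}
    (hlb : ∀ i, μ ≤ hA.eigenvalues i) (w : EuclideanSpace ℝ (Fin d)) :
    μ * ‖w‖ ^ 2 ≤ ⟪Matrix.toEuclideanLin A w, w⟫_ℝ := by
  set b := hA.eigenvectorBasis with hb
  have hsym := Matrix.isHermitian_iff_isSymmetric.1 hA
  have expand : ∀ x : EuclideanSpace ℝ (Fin d),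
      ⟪x, w⟫_ℝ = ∑ i, ⟪b i, w⟫_ℝ * ⟪x, b i⟫_ℝ := by
    intro x
    conv_lhs => rw [← b.sum_repr' w]
    rw [inner_sum]
    refine Finset.sum_congr rfl fun i _ => ?_
    rw [real_inner_smul_right]
  have h1 : ⟪Matrix.toEuclideanLin A w, w⟫_ℝ
      = ∑ i, hA.eigenvalues i * ⟪b i, w⟫_ℝ ^ 2 := by
    rw [expand (Matrix.toEuclideanLin A w)]
    refine Finset.sum_congr rfl fun i _ => ?_
    have hx : ⟪Matrix.toEuclideanLin A w, b i⟫_ℝ = hA.eigenvalues i * ⟪b i, w⟫_ℝ := by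
      rw [real_inner_comm, ← hsym (b i) w, eigen_toEuclideanLin hA i, real_inner_smul_left]
    rw [hx]; ring
  have h2 : ‖w‖ ^ 2 = ∑ i, ⟪b i, w⟫_ℝ ^ 2 := by
    rw [← real_inner_self_eq_norm_sq, expand w]
    refine Finset.sum_congr rfl fun i _ => ?_
    rw [real_inner_comm]; ring
  rw [h1, h2, Finset.mul_sum]
  refine Finset.sum_le_sum fun i _ => ?_
  have := sq_nonneg (⟪b i, w⟫_ℝ)
  nlinarith [hlb i]


private lemma mvt_bound {d : ℕ} (F F' : ℝ → EuclideanSpace ℝ (Fin d)) (C : ℝ)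
    (hF : ∀ t : ℝ, HasDerivAt F (F' t) t)
    (hb : ∀ t ∈ Set.Ico (0:ℝ) 1, ‖F' t‖ ≤ C) : ‖F 1 - F 0‖ ≤ C := by
  have h := norm_image_sub_le_of_norm_deriv_le_segment'
    (f := F) (f' := F') (C := C) (fun x _ => (hF x).hasDerivWithinAt) hb 1
    (Set.right_mem_Icc.2 zero_le_one)
  simpa using h

set_option maxHeartbeats 2000000 in
/-- Small loss implies the Newton step is small (no clipping). -/
theorem sophia_small_loss_imply_no_clipping
    (d : ℕ)
    (L : EuclideanSpace ℝ (Fin d) → ℝ)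
    (grad : EuclideanSpace ℝ (Fin d) → EuclideanSpace ℝ (Fin d))
    (hess : EuclideanSpace ℝ (Fin d) → Matrix (Fin d) (Fin d) ℝ)
    (hC2 : ContDiff ℝ 2 L)
    (hgrad : ∀ θ, HasGradientAt L (grad θ) θ)
    (hhess : ∀ θ, HasFDerivAt grad ((Matrix.toEuclideanLin (hess θ)).toContinuousLinearMap) θ)
    (hconv : StrictConvexOn ℝ Set.univ L)
    (hpd : ∀ θ, (hess θ).PosDef)
    (θstar : EuclideanSpace ℝ (Fin d))
    (hmin : ∀ θ, L θstar ≤ L θ)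
    (μ : ℝ)
    (hμ : IsLeast {c : ℝ | ∃ v : EuclideanSpace ℝ (Fin d), ‖v‖ = 1 ∧
      Matrix.toEuclideanLin (hess θstar) v = c • v} μ)
    (R : ℝ) (hR : 0 < R)
    (hhessLip : ∀ θ θ' : EuclideanSpace ℝ (Fin d), ‖θ - θ'‖ ≤ R →
      ‖(Matrix.toEuclideanLin ((hess θ')⁻¹ * hess θ)).toContinuousLinearMap‖ ≤ 2)
    (θ : EuclideanSpace ℝ (Fin d))
    (hloss : L θ - L θstar ≤ μ * R ^ 2 / 16) :
    ‖Matrix.toEuclideanLin (hess θ)⁻¹ (grad θ)‖ ≤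
      Real.sqrt (8 * (L θ - L θstar) / μ) := by
  classical
  set δ := L θ - L θstar with hδdef
  have hδ0 : 0 ≤ δ := sub_nonneg.2 (hmin θ)
  -- μ is positive
  obtain ⟨v₀, hv₀norm, hv₀eig⟩ := hμ.1
  have hv₀ne : v₀ ≠ 0 := fun h => by simp [h] at hv₀norm
  have hμpos : 0 < μ := by
    have h1 : 0 < ⟪Matrix.toEuclideanLin (hess θstar) v₀, v₀⟫_ℝ := quad_pos (hpd θstar) hv₀ne
    rw [hv₀eig, real_inner_smul_left, real_inner_self_eq_norm_mul_norm, hv₀norm] at h1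
    simpa using h1
  -- quadratic form lower bound at θstar
  have hmu_quad : ∀ w : EuclideanSpace ℝ (Fin d), μ * ‖w‖ ^ 2 ≤ ⟪Matrix.toEuclideanLin (hess θstar) w, w⟫_ℝ := by
    intro w
    apply quad_ge_mu (hpd θstar).isHermitian _ w
    intro i
    apply hμ.2
    exact ⟨(hpd θstar).isHermitian.eigenvectorBasis i,
      (hpd θstar).isHermitian.eigenvectorBasis.orthonormal.1 i,
      eigen_toEuclideanLin (hpd θstar).isHermitian i⟩
  -- gradient vanishes at θstar
  have gstar0 : grad θstar = 0 := by
    have hloc : IsLocalMin L θstar := Filter.Eventually.of_forall hmin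
    have h0 := hloc.hasFDerivAt_eq_zero (hgrad θstar).hasFDerivAt
    have : InnerProductSpace.toDual ℝ (EuclideanSpace ℝ (Fin d)) (grad θstar) = 0 := h0
    simpa using this
  -- derivative machinery
  have hcurve : ∀ (a v : EuclideanSpace ℝ (Fin d)) (t : ℝ), HasDerivAt (fun s : ℝ => a + s • v) v t := by
    intro a v t
    simpa using ((hasDerivAt_id t).smul_const v).const_add a
  have key_f : ∀ (a v : EuclideanSpace ℝ (Fin d)) (t : ℝ),
      HasDerivAt (fun s : ℝ => L (a + s • v)) ⟪grad (a + t • v), v⟫_ℝ t := by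
    intro a v t
    have h := (hgrad (a + t • v)).hasFDerivAt.comp_hasDerivAt t (hcurve a v t)
    simpa [InnerProductSpace.toDual_apply_apply, Function.comp_def] using h
  have key_f' : ∀ (a v : EuclideanSpace ℝ (Fin d)) (t : ℝ),
      HasDerivAt (fun s : ℝ => ⟪grad (a + s • v), v⟫_ℝ)
        ⟪Matrix.toEuclideanLin (hess (a + t • v)) v, v⟫_ℝ t := by
    intro a v t
    have hG : HasDerivAt (fun s : ℝ => grad (a + s • v))
        ((Matrix.toEuclideanLin (hess (a + t • v))).toContinuousLinearMap v) t :=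
      (hhess (a + t • v)).comp_hasDerivAt t (hcurve a v t)
    have h := hG.inner ℝ (hasDerivAt_const t v)
    simpa using h
  have taylor_lb : ∀ (a v : EuclideanSpace ℝ (Fin d)) (c : ℝ),
      (∀ t ∈ Set.Icc (0:ℝ) 1, c ≤ ⟪Matrix.toEuclideanLin (hess (a + t • v)) v, v⟫_ℝ) →
      L a + ⟪grad a, v⟫_ℝ + c / 2 ≤ L (a + v) := by
    intro a v c hc
    have := taylor_lb_aux _ _ _ (key_f a v) (key_f' a v) c hc
    simpa using this
  have taylor_ub : ∀ (a v : EuclideanSpace ℝ (Fin d)) (C : ℝ),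
      (∀ t ∈ Set.Icc (0:ℝ) 1, ⟪Matrix.toEuclideanLin (hess (a + t • v)) v, v⟫_ℝ ≤ C) →
      L (a + v) ≤ L a + ⟪grad a, v⟫_ℝ + C / 2 := by
    intro a v C hC
    have := taylor_ub_aux _ _ _ (key_f a v) (key_f' a v) C hC
    simpa using this
  set Δ := θ - θstar with hΔdef
  -- Step 1 : ‖Δ‖ ≤ R
  have hΔR : ‖Δ‖ ≤ R := by
    by_contra hcon
    push_neg at hcon
    have hΔpos : 0 < ‖Δ‖ := lt_trans hR hcon
    set τ := R / ‖Δ‖ with hτdef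
    have hτpos : 0 < τ := div_pos hR hΔpos
    have hτlt : τ < 1 := (div_lt_one hΔpos).2 hcon
    set w := τ • Δ with hwdef
    have hwnorm : ‖w‖ = R := by
      rw [hwdef, norm_smul, Real.norm_eq_abs, abs_of_pos hτpos, hτdef,
        div_mul_cancel₀ _ hΔpos.ne']
    have hlb : ∀ t ∈ Set.Icc (0:ℝ) 1, μ * R ^ 2 / 2 ≤
        ⟪Matrix.toEuclideanLin (hess (θstar + t • w)) w, w⟫_ℝ := by
      intro t ht
      have hdist : ‖θstar - (θstar + t • w)‖ ≤ R := by
        have he : θstar - (θstar + t • w) = -(t • w) := by abel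
        rw [he, norm_neg, norm_smul, Real.norm_eq_abs, abs_of_nonneg ht.1, hwnorm]
        calc t * R ≤ 1 * R := by
              apply mul_le_mul_of_nonneg_right ht.2 hR.le
          _ = R := one_mul R
      have hloe := loewner (hpd (θstar + t • w)) (hpd θstar)
        (hhessLip θstar (θstar + t • w) hdist) w
      have hq := hmu_quad w
      rw [hwnorm] at hq
      linarith
    have htl := taylor_lb θstar w (μ * R ^ 2 / 2) hlb
    rw [gstar0] at htl
    simp only [inner_zero_left, add_zero] at htl
    have hcvx : L (θstar + w) ≤ (1 - τ) * L θstar + τ * L θ := by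
      have hcomb : θstar + w = (1 - τ) • θstar + τ • θ := by
        rw [hwdef, hΔdef, smul_sub, sub_smul, one_smul]
        abel
      rw [hcomb]
      exact hconv.convexOn.2 (Set.mem_univ θstar) (Set.mem_univ θ)
        (by linarith) hτpos.le (by ring)
    have hfin : μ * R ^ 2 / 4 ≤ τ * δ := by
      have : (1 - τ) * L θstar + τ * L θ = L θstar + τ * δ := by
        rw [hδdef]; ring
      rw [this] at hcvx
      linarith
    have : τ * δ ≤ δ := by
      nlinarith
    nlinarith [mul_pos hμpos (pow_pos hR 2)]

  -- vector-level multiplicativity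
  have hκv : ∀ (M P : Matrix (Fin d) (Fin d) ℝ) (x : EuclideanSpace ℝ (Fin d)),
      Matrix.toEuclideanLin (M * P) x = Matrix.toEuclideanLin M (Matrix.toEuclideanLin P x) := by
    intro M P x
    exact DFunLike.congr_fun (κ_mul M P) x
  have hone : ∀ x : EuclideanSpace ℝ (Fin d),
      Matrix.toEuclideanLin (1 : Matrix (Fin d) (Fin d) ℝ) x = x := by
    intro x
    exact DFunLike.congr_fun (κ_one (d := d)) x
  set N := Matrix.toEuclideanLin (hess θ)⁻¹ (grad θ) with hNdef
  -- ‖N‖ ≤ 2 ‖Δ‖ via the mean value inequality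
  have hNΔ : ‖N‖ ≤ 2 * ‖Δ‖ := by
    have hderivF : ∀ t : ℝ, HasDerivAt (fun s : ℝ => κ (hess θ)⁻¹ (grad (θstar + s • Δ)))
        (κ ((hess θ)⁻¹ * hess (θstar + t • Δ)) Δ) t := by
      intro t
      have hG : HasDerivAt (fun s : ℝ => grad (θstar + s • Δ))
          (κ (hess (θstar + t • Δ)) Δ) t :=
        (hhess (θstar + t • Δ)).comp_hasDerivAt t (hcurve θstar Δ t)
      have h2 := ((κ (hess θ)⁻¹).hasFDerivAt).comp_hasDerivAt t hG
      rw [κ_mul]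
      exact h2
    have hbound : ∀ t ∈ Set.Ico (0:ℝ) 1,
        ‖κ ((hess θ)⁻¹ * hess (θstar + t • Δ)) Δ‖ ≤ 2 * ‖Δ‖ := by
      intro t ht
      have hdist : ‖(θstar + t • Δ) - θ‖ ≤ R := by
        have he : (θstar + t • Δ) - θ = (t - 1) • Δ := by
          rw [sub_smul, one_smul, hΔdef]; abel
        rw [he, norm_smul, Real.norm_eq_abs, abs_of_nonpos (by linarith [ht.2] : t - 1 ≤ 0)]
        calc -(t - 1) * ‖Δ‖ ≤ 1 * ‖Δ‖ := by
              apply mul_le_mul_of_nonneg_right (by linarith [ht.1]) (norm_nonneg _)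
          _ = ‖Δ‖ := one_mul _
          _ ≤ R := hΔR
      calc ‖κ ((hess θ)⁻¹ * hess (θstar + t • Δ)) Δ‖
          ≤ ‖κ ((hess θ)⁻¹ * hess (θstar + t • Δ))‖ * ‖Δ‖ :=
            ContinuousLinearMap.le_opNorm _ _
        _ ≤ 2 * ‖Δ‖ := mul_le_mul_of_nonneg_right
            (hhessLip (θstar + t • Δ) θ hdist) (norm_nonneg _)
    have hmvt := mvt_bound _ _ _ hderivF hbound
    have hF1 : κ (hess θ)⁻¹ (grad (θstar + (1:ℝ) • Δ)) = N := by
      rw [show θstar + (1:ℝ) • Δ = θ by rw [one_smul, hΔdef]; abel, hNdef, κ_apply]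
    have hF0 : κ (hess θ)⁻¹ (grad (θstar + (0:ℝ) • Δ)) = 0 := by
      rw [show θstar + (0:ℝ) • Δ = θstar by rw [zero_smul]; abel, gstar0, map_zero]
    simp only [hF1, hF0, sub_zero] at hmvt
    exact hmvt
  -- the Newton decrement
  have hdet : IsUnit (hess θ).det := isUnit_iff_ne_zero.2 (hpd θ).det_pos.ne'
  have hA1N : Matrix.toEuclideanLin (hess θ) N = grad θ := by
    rw [hNdef, ← hκv, Matrix.mul_nonsing_inv _ hdet, hone]
  set lam := ⟪grad θ, N⟫_ℝ with hlamdef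
  have hlamA : ⟪Matrix.toEuclideanLin (hess θ) N, N⟫_ℝ = lam := by rw [hA1N]
  -- Step 2 : lam ≤ 4 δ  (half Newton step)
  have hstep2 : lam ≤ 4 * δ := by
    set w2 := (-(1/2) : ℝ) • N with hw2def
    have hub : ∀ t ∈ Set.Icc (0:ℝ) 1,
        ⟪Matrix.toEuclideanLin (hess (θ + t • w2)) w2, w2⟫_ℝ ≤ lam / 2 := by
      intro t ht
      have hdist : ‖(θ + t • w2) - θ‖ ≤ R := by
        have he : (θ + t • w2) - θ = (t * (-(1/2))) • N := by
          rw [hw2def, smul_smul]; abel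
        rw [he, norm_smul, Real.norm_eq_abs, abs_mul]
        have h1 : |t| * |(-(1/2) : ℝ)| ≤ 1/2 := by
          rw [abs_of_nonneg ht.1]
          rw [show |(-(1/2) : ℝ)| = 1/2 by norm_num]
          nlinarith [ht.2]
        calc |t| * |(-(1/2):ℝ)| * ‖N‖ ≤ 1/2 * ‖N‖ :=
              mul_le_mul_of_nonneg_right h1 (norm_nonneg _)
          _ ≤ ‖Δ‖ := by linarith [hNΔ]
          _ ≤ R := hΔR
      have hloe := loewner (hpd θ) (hpd (θ + t • w2))
        (hhessLip (θ + t • w2) θ hdist) w2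
      have hquad : ⟪Matrix.toEuclideanLin (hess θ) w2, w2⟫_ℝ = (1/4) * lam := by
        rw [hw2def, LinearMap.map_smul, real_inner_smul_left, real_inner_smul_right, hlamA]
        ring
      rw [hquad] at hloe
      linarith
    have htu := taylor_ub θ w2 (lam / 2) hub
    have hw2g : ⟪grad θ, w2⟫_ℝ = -(1/2) * lam := by
      rw [hw2def, real_inner_smul_right]
    rw [hw2g] at htu
    have hmin2 := hmin (θ + w2)
    rw [hδdef]
    linarith
  -- Step 3 : μ ‖N‖² ≤ 2 lam
  have hstep3 : μ * ‖N‖ ^ 2 ≤ 2 * lam := by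
    have hdist : ‖θstar - θ‖ ≤ R := by
      rw [show θstar - θ = -Δ by rw [hΔdef]; abel, norm_neg]
      exact hΔR
    have hloe := loewner (hpd θ) (hpd θstar) (hhessLip θstar θ hdist) N
    rw [hlamA] at hloe
    linarith [hmu_quad N]
  -- conclusion
  have hfin : ‖N‖ ^ 2 ≤ 8 * δ / μ := by
    rw [le_div_iff₀ hμpos]
    nlinarith
  calc ‖N‖ = Real.sqrt (‖N‖ ^ 2) := (Real.sqrt_sq (norm_nonneg N)).symm
    _ ≤ Real.sqrt (8 * δ / μ) := Real.sqrt_le_sqrt hfin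
end
end

section
/- Lower bound for SignGD on quadratics: let L(θ) = (μ/2)θ₁² + (β/2)θ₂² on ℝ² with μ, β > 0. For any Δ, ε > 0, suppose there exist a learning rate η and a time T such that for every θ₀ with L(θ₀) ≤ Δ, the SignGD iteration θ_{t+1} = θ_t - η·sign(∇L(θ_t)) satisfies L(θ_{T-1}) ≤ ε and L(θ_T) ≤ ε. Then T ≥ (1/2)(sqrt(Δ/ε) - √2)·sqrt(β/μ). -/
noncomputable section

set_option maxHeartbeats 1000000 in
/-- Lower bound for SignGD on the quadratic `L(θ) = (μ/2)θ₁² + (β/2)θ₂²`: if a learning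
rate `η` and a time `T` are such that, from every initialization with loss at most `Δ`,
the SignGD iterates have loss at most `ε` at both steps `T-1` and `T`, then
`T ≥ (1/2)(√(Δ/ε) - √2)·√(β/μ)`. -/
theorem sophia_signgd_lower_bound
    (μ β Δ ε : ℝ) (hμ : 0 < μ) (hβ : 0 < β) (hΔ : 0 < Δ) (hε : 0 < ε)
    (η : ℝ) (T : ℕ) (hT : 1 ≤ T)
    (H : ∀ θ0 : ℝ × ℝ, μ / 2 * θ0.1 ^ 2 + β / 2 * θ0.2 ^ 2 ≤ Δ →
      ∀ θseq : ℕ → ℝ × ℝ, θseq 0 = θ0 →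
        (∀ t, θseq (t + 1) =
          ((θseq t).1 - η * Real.sign (μ * (θseq t).1),
           (θseq t).2 - η * Real.sign (β * (θseq t).2))) →
        μ / 2 * (θseq (T - 1)).1 ^ 2 + β / 2 * (θseq (T - 1)).2 ^ 2 ≤ ε ∧
        μ / 2 * (θseq T).1 ^ 2 + β / 2 * (θseq T).2 ^ 2 ≤ ε) :
    (1 / 2) * (Real.sqrt (Δ / ε) - Real.sqrt 2) * Real.sqrt (β / μ) ≤ (T : ℝ) := by
  by_cases hcase : Δ ≤ 2 * ε
  · -- trivial case: RHS is nonpositive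
    have h1 : Real.sqrt (Δ / ε) ≤ Real.sqrt 2 := by
      apply Real.sqrt_le_sqrt
      rw [div_le_iff₀ hε]; linarith
    have h2 : (1 / 2 : ℝ) * (Real.sqrt (Δ / ε) - Real.sqrt 2) * Real.sqrt (β / μ) ≤ 0 := by
      apply mul_nonpos_of_nonpos_of_nonneg _ (Real.sqrt_nonneg _)
      nlinarith
    exact h2.trans (Nat.cast_nonneg T)
  push_neg at hcase
  -- the step map
  set f : ℝ × ℝ → ℝ × ℝ := fun p =>
    (p.1 - η * Real.sign (μ * p.1), p.2 - η * Real.sign (β * p.2)) with hfdef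
  have hfapp : ∀ p : ℝ × ℝ, f p = (p.1 - η * Real.sign (μ * p.1), p.2 - η * Real.sign (β * p.2)) :=
    fun p => rfl
  have hrec : ∀ θ0 : ℝ × ℝ, ∀ t : ℕ,
      (fun t => f^[t] θ0) (t + 1) =
        (((fun t => f^[t] θ0) t).1 - η * Real.sign (μ * ((fun t => f^[t] θ0) t).1),
         ((fun t => f^[t] θ0) t).2 - η * Real.sign (β * ((fun t => f^[t] θ0) t).2)) := by
    intro θ0 t
    simp only [Function.iterate_succ_apply', hfapp]
  -- initialization on the first coordinate
  set x0 : ℝ := Real.sqrt (2 * Δ / μ) with hx0def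
  have hx0pos : 0 < x0 := Real.sqrt_pos.2 (by positivity)
  have hx0sq : x0 ^ 2 = 2 * Δ / μ := Real.sq_sqrt (by positivity)
  have hx0Δ : μ / 2 * x0 ^ 2 = Δ := by
    rw [hx0sq]; field_simp
  have hloss1 : μ / 2 * (x0, (0:ℝ)).1 ^ 2 + β / 2 * (x0, (0:ℝ)).2 ^ 2 ≤ Δ := by
    simp only
    nlinarith [hx0Δ]
  -- rule out η ≤ 0
  have hηpos : 0 < η := by
    by_contra hη
    push_neg at hη
    have inv : ∀ t : ℕ, x0 ≤ (f^[t] (x0, (0:ℝ))).1 ∧ (f^[t] (x0, (0:ℝ))).2 = 0 := by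
      intro t
      induction t with
      | zero => simp
      | succ n ih =>
        rw [Function.iterate_succ_apply']
        obtain ⟨h1, h2⟩ := ih
        constructor
        · have hpos : 0 < μ * (f^[n] (x0, (0:ℝ))).1 := by nlinarith
          simp only [hfapp, Real.sign_of_pos hpos]
          linarith
        · simp only [hfapp, h2, mul_zero, Real.sign_zero]
          ring
    obtain ⟨hA, hB⟩ := H (x0, 0) hloss1 (fun t => f^[t] (x0, 0)) rfl (hrec _)
    obtain ⟨h1, h2⟩ := inv T
    rw [h2] at hB
    have h3 : x0 ^ 2 ≤ (f^[T] (x0, (0:ℝ))).1 ^ 2 := by nlinarith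
    nlinarith [hx0Δ]
  -- trajectory 1: magnitude of first coordinate decreases by at most η per step
  have inv1 : ∀ t : ℕ, x0 - t * η ≤ |(f^[t] (x0, (0:ℝ))).1| ∧ (f^[t] (x0, (0:ℝ))).2 = 0 := by
    intro t
    induction t with
    | zero => simpa using le_of_eq (abs_of_pos hx0pos).symm
    | succ n ih =>
      obtain ⟨h1, h2⟩ := ih
      rw [Function.iterate_succ_apply']
      refine ⟨?_, by simp only [hfapp, h2, mul_zero, Real.sign_zero]; ring⟩
      set x := (f^[n] (x0, (0:ℝ))).1 with hx
      rcases lt_trichotomy x 0 with hx0' | hx0' | hx0'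
      · have hs : Real.sign (μ * x) = -1 := Real.sign_of_neg (by nlinarith)
        simp only [hfapp, hs]
        rw [← hx, hs]
        have hle : -(x - η * (-1)) ≤ |x - η * (-1)| := neg_le_abs _
        have hax : |x| = -x := abs_of_neg hx0'
        push_cast
        push_cast at h1
        linarith
      · have hs : Real.sign (μ * x) = 0 := by rw [hx0', mul_zero, Real.sign_zero]
        simp only [hfapp, hs, mul_zero, sub_zero]
        rw [← hx]
        rw [hx0'] at h1 ⊢
        simp only [abs_zero, mul_zero, Real.sign_zero, sub_zero] at h1 ⊢
        push_cast
        linarith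
      · have hs : Real.sign (μ * x) = 1 := Real.sign_of_pos (by nlinarith)
        simp only [hfapp, hs]
        rw [← hx, hs]
        have hle : x - η * 1 ≤ |x - η * 1| := le_abs_self _
        have hax : |x| = x := abs_of_pos hx0'
        push_cast
        push_cast at h1
        linarith
  obtain ⟨_, hB1⟩ := H (x0, 0) hloss1 (fun t => f^[t] (x0, 0)) rfl (hrec _)
  -- bound |θ1 T| by sqrt(2ε/μ)
  have hend1 : |(f^[T] (x0, (0:ℝ))).1| ≤ Real.sqrt (2 * ε / μ) := by
    obtain ⟨h1, h2⟩ := inv1 T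
    rw [h2] at hB1
    rw [← Real.sqrt_sq_eq_abs]
    apply Real.sqrt_le_sqrt
    rw [le_div_iff₀ hμ]
    nlinarith
  have key1 : x0 - (T : ℝ) * η ≤ Real.sqrt (2 * ε / μ) := le_trans (inv1 T).1 hend1
  -- trajectory 2: oscillation on the second coordinate
  set y0 : ℝ := min (η / 2) (Real.sqrt (2 * Δ / β)) with hy0def
  have hsβΔ : 0 < Real.sqrt (2 * Δ / β) := Real.sqrt_pos.2 (by positivity)
  have hy0pos : 0 < y0 := lt_min (by linarith) hsβΔ
  have hy0η : y0 ≤ η / 2 := min_le_left _ _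
  have hloss2 : μ / 2 * ((0:ℝ), y0).1 ^ 2 + β / 2 * ((0:ℝ), y0).2 ^ 2 ≤ Δ := by
    simp only
    have h1 : y0 ≤ Real.sqrt (2 * Δ / β) := min_le_right _ _
    have h2 : y0 ^ 2 ≤ 2 * Δ / β := by
      rw [← Real.sq_sqrt (show (0:ℝ) ≤ 2 * Δ / β by positivity)]
      exact pow_le_pow_left₀ hy0pos.le h1 2
    rw [le_div_iff₀ hβ] at h2
    nlinarith
  have inv2 : ∀ t : ℕ, (f^[t] ((0:ℝ), y0)).1 = 0 ∧
      ((f^[t] ((0:ℝ), y0)).2 = y0 ∨ (f^[t] ((0:ℝ), y0)).2 = y0 - η) := by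
    intro t
    induction t with
    | zero => simp
    | succ n ih =>
      obtain ⟨h1, h2⟩ := ih
      rw [Function.iterate_succ_apply']
      refine ⟨by simp only [hfapp, h1, mul_zero, Real.sign_zero]; ring, ?_⟩
      rcases h2 with h2 | h2
      · right
        have hs : Real.sign (β * (f^[n] ((0:ℝ), y0)).2) = 1 :=
          Real.sign_of_pos (by rw [h2]; exact mul_pos hβ hy0pos)
        simp only [hfapp]
        rw [hs, h2]; ring
      · left
        have hs : Real.sign (β * (f^[n] ((0:ℝ), y0)).2) = -1 :=
          Real.sign_of_neg (by rw [h2]; nlinarith [hy0η, hηpos])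
        simp only [hfapp]
        rw [hs, h2]; ring
  obtain ⟨_, hB2⟩ := H (0, y0) hloss2 (fun t => f^[t] (0, y0)) rfl (hrec _)
  have hy0small : y0 ≤ Real.sqrt (2 * ε / β) := by
    obtain ⟨h1, h2⟩ := inv2 T
    rw [h1] at hB2
    have habs : y0 ≤ |(f^[T] ((0:ℝ), y0)).2| := by
      rcases h2 with h2 | h2
      · rw [h2, abs_of_pos hy0pos]
      · rw [h2, abs_of_neg (by linarith : y0 - η < 0)]
        linarith
    have hab2 : |(f^[T] ((0:ℝ), y0)).2| ≤ Real.sqrt (2 * ε / β) := by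
      rw [← Real.sqrt_sq_eq_abs]
      apply Real.sqrt_le_sqrt
      rw [le_div_iff₀ hβ]
      nlinarith
    linarith
  -- hence η ≤ 2 √(2ε/β)
  have hηbound : η ≤ 2 * Real.sqrt (2 * ε / β) := by
    have hlt : Real.sqrt (2 * ε / β) < Real.sqrt (2 * Δ / β) := by
      apply Real.sqrt_lt_sqrt (by positivity)
      exact div_lt_div_of_pos_right (by linarith) hβ
    rcases le_or_gt (η / 2) (Real.sqrt (2 * Δ / β)) with hle | hlt2
    · rw [hy0def, min_eq_left hle] at hy0small; linarith
    · rw [hy0def, min_eq_right hlt2.le] at hy0small; linarith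
  -- final arithmetic
  have hsΔμ : Real.sqrt (2 * Δ / μ) = Real.sqrt 2 * Real.sqrt Δ / Real.sqrt μ := by
    rw [Real.sqrt_div (by positivity), Real.sqrt_mul (by norm_num)]
  have hsεμ : Real.sqrt (2 * ε / μ) = Real.sqrt 2 * Real.sqrt ε / Real.sqrt μ := by
    rw [Real.sqrt_div (by positivity), Real.sqrt_mul (by norm_num)]
  have hsεβ : Real.sqrt (2 * ε / β) = Real.sqrt 2 * Real.sqrt ε / Real.sqrt β := by
    rw [Real.sqrt_div (by positivity), Real.sqrt_mul (by norm_num)]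
  rw [Real.sqrt_div hΔ.le, Real.sqrt_div hβ.le]
  rw [hx0def, hsΔμ, hsεμ] at key1
  rw [hsεβ] at hηbound
  set a := Real.sqrt Δ with ha
  set e := Real.sqrt ε with he
  set m := Real.sqrt μ with hm
  set b := Real.sqrt β with hb
  set r := Real.sqrt 2 with hr
  have hapos : 0 < a := Real.sqrt_pos.2 hΔ
  have hepos : 0 < e := Real.sqrt_pos.2 hε
  have hmpos : 0 < m := Real.sqrt_pos.2 hμ
  have hbpos : 0 < b := Real.sqrt_pos.2 hβ
  have hrone : (1:ℝ) ≤ r := by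
    rw [hr, show (1:ℝ) = Real.sqrt 1 by simp]
    exact Real.sqrt_le_sqrt (by norm_num)
  have hrpos : 0 < r := by linarith
  have hTnn : (0:ℝ) ≤ (T:ℝ) := Nat.cast_nonneg T
  -- T*η ≥ r*a/m - r*e/m  and  η ≤ 2*(r*e/b)
  have stepA : (T:ℝ) * η ≤ (T:ℝ) * (2 * (r * e / b)) :=
    mul_le_mul_of_nonneg_left hηbound hTnn
  have e1 : r * a / m - r * e / m = r * (a - e) / m := by ring
  have e2 : (T:ℝ) * (2 * (r * e / b)) = 2 * (T:ℝ) * r * e / b := by ring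
  have hC : r * (a - e) / m ≤ 2 * (T:ℝ) * r * e / b := by
    rw [← e1, ← e2]; linarith
  rw [div_le_div_iff₀ hmpos hbpos] at hC
  have hD : (a - e) * b ≤ 2 * (T:ℝ) * e * m := by
    have hC' : r * ((a - e) * b) ≤ r * (2 * (T:ℝ) * e * m) := by
      calc r * ((a - e) * b) = r * (a - e) * b := by ring
        _ ≤ 2 * (T:ℝ) * r * e * m := hC
        _ = r * (2 * (T:ℝ) * e * m) := by ring
    exact le_of_mul_le_mul_left hC' hrpos
  have egoal : (1/2 : ℝ) * (a / e - r) * (b / m) = ((a - r * e) * b) / (2 * e * m) := by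
    rw [eq_div_iff (by positivity : (2*e*m) ≠ 0)]
    have h1 : a / e * e = a := div_mul_cancel₀ a hepos.ne'
    have h2 : b / m * m = b := div_mul_cancel₀ b hmpos.ne'
    linear_combination (b / m * m) * h1 + (a - r * e) * h2
  rw [egoal, div_le_iff₀ (by positivity)]
  have hE : 0 ≤ (r - 1) * e * b :=
    mul_nonneg (mul_nonneg (by linarith : (0:ℝ) ≤ r - 1) hepos.le) hbpos.le
  linarith only [hD, hE]
end
end
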